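/- arXiv:1301.4624 — 3 statements merged into one kernel-verified Lean document; each statement's English description precedes it below -/
import Mathlib

section
/- Fix a non-compact well-ordered space J. For any J-convergence spaces X, Y, Z, the exponential correspondence sending a continuous map f : X ×_J Y → Z to its adjoint x ↦ (y ↦ f(x,y)) is a natural homeomorphism J M_J(X ×_J Y, Z) ≅ J M_J(X, J M_J(Y, Z)). Consequently the category of J-convergence spaces with the J-product and function spaces J M_J(X,Y) is Cartesian closed. -/
open Set Topology TopologicalSpace

universe u v w

/-- The order topology on `WithTop α`; for a noncompact well-ordered `α` with the order
topology, `WithTop α` with this topology is the one-point (Alexandroff) compactification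
`α ∪ {∞_α}`, in which `⊤ = ∞_α` is the maximum. -/
noncomputable instance withTopOrderTopology {α : Type*} [Preorder α] :
    TopologicalSpace (WithTop α) := Preorder.topology _

/-- `I` is almost closed in the ordered topological space `S`:
`closure I \ I = {ℓ}` where `ℓ = min {s ∈ S | I < s}`. -/
def AlmostClosedIn {S : Type*} [LinearOrder S] [TopologicalSpace S] (I : Set S) : Prop :=
  ∃ ℓ : S, closure I \ I = {ℓ} ∧ IsLeast {s : S | ∀ i ∈ I, i < s} ℓ

/-- `I ⊆ J` is almost closed in `J ∪ {∞_J}` (modeled as `WithTop J` with the order topology). -/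
def AlmostClosed {J : Type*} [LinearOrder J] (I : Set J) : Prop :=
  AlmostClosedIn ((fun j : J => (j : WithTop J)) '' I)

/-- A subset `C ⊆ X` is `J`-closed: for every almost closed `I ⊆ J` and continuous
`f : I ∪ {∞_I} → X` (where `I ∪ {∞_I} = WithTop ↥I` is the one-point compactification of
`I` with its internal order topology) with `f(I) ⊆ C` one has `f(∞_I) ∈ C`. -/
def JClosedSet (J : Type v) [LinearOrder J] (X : Type u) [TopologicalSpace X] (C : Set X) : Prop :=
  ∀ I : Set J, AlmostClosed I → ∀ f : WithTop ↥I → X, Continuous f →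
    (∀ i : ↥I, f (WithTop.some i) ∈ C) → f ⊤ ∈ C

/-- `U ⊆ X` is `J`-open iff its complement is `J`-closed. -/
def JOpenSet (J : Type v) [LinearOrder J] (X : Type u) [TopologicalSpace X] (U : Set X) : Prop :=
  JClosedSet J X Uᶜ

/-- `X` is a `J`-convergence space. -/
def IsJConvergence (J : Type v) [LinearOrder J] (X : Type u) [TopologicalSpace X] : Prop :=
  ∀ A : Set X, ¬ IsClosed A →
    ∃ I : Set J, AlmostClosed I ∧ ∃ f : WithTop ↥I → X, Continuous f ∧
      (∀ i : ↥I, f (WithTop.some i) ∈ A) ∧ f ⊤ ∉ A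

/-- `JX`: the topology of `J`-open sets. -/
noncomputable def jTop (J : Type v) [LinearOrder J] (X : Type u) [tX : TopologicalSpace X] :
    TopologicalSpace X := generateFrom {U : Set X | JOpenSet J X U}

/-- `K` is a compact Hausdorff witness for the failure of `A` to be closed. -/
def CGWitness (K : Type v) [tK : TopologicalSpace K] (X : Type u) [TopologicalSpace X]
    (A : Set X) : Prop :=
  CompactSpace K ∧ T2Space K ∧ ∃ f : K → X, Continuous f ∧ ¬ IsClosed (f ⁻¹' A)

/-- `X` is compactly generated. -/
def CompactlyGen.{v', u'} (X : Type u') [TopologicalSpace X] : Prop :=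
  ∀ A : Set X, ¬ IsClosed A → ∃ (K : Type v') (tK : TopologicalSpace K), @CGWitness K tK X _ A

/-- `kX`: `U` is open iff `f ⁻¹ U` is open for every continuous map from a compact
Hausdorff space. -/
def kTop.{v', u'} (X : Type u') [tX : TopologicalSpace X] : TopologicalSpace X :=
  generateFrom {U : Set X |
    ∀ (K : Type v') (tK : TopologicalSpace K), @CompactSpace K tK → @T2Space K tK →
      ∀ f : K → X, Continuous[tK, tX] f → IsOpen[tK] (f ⁻¹' U)}

/-- The directed topology on the successor `J' ∪ {∞} = WithTop J'`: generated by singletons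
`{j}` and final segments `(j, ∞]` for `j ∈ J'`. -/
def directedTopology (J' : Type*) [Preorder J'] : TopologicalSpace (WithTop J') :=
  generateFrom {s : Set (WithTop J') |
    (∃ j : J', s = {WithTop.some j}) ∨ ∃ j : J', s = Ioi (WithTop.some j)}

/-- `J'` witnesses transfinite convergence into `A`. -/
def TransfiniteWitness (J' : Type v) [LinearOrder J'] (X : Type u) [TopologicalSpace X]
    (A : Set X) : Prop :=
  WellFoundedLT J' ∧ Nonempty J' ∧ NoMaxOrder J' ∧
    ∃ f : WithTop J' → X, Continuous[directedTopology J', _] f ∧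
      (∀ j : J', f (WithTop.some j) ∈ A) ∧ f ⊤ ∉ A

/-- `X` is a transfinite sequential space. -/
def TransfiniteSequential.{v', u'} (X : Type u') [TopologicalSpace X] : Prop :=
  ∀ A : Set X, ¬ IsClosed A →
    ∃ (J' : Type v') (lo : LinearOrder J'), @TransfiniteWitness J' lo X _ A

/-- `X` is a `J`-unique convergence space. -/
def JUnique (J : Type v) [LinearOrder J] (X : Type u) [TopologicalSpace X] : Prop :=
  ∀ I : Set J, AlmostClosed I → ∀ f g : WithTop ↥I → X, Continuous f → Continuous g →
    (∀ i : ↥I, f (WithTop.some i) = g (WithTop.some i)) → f = g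

/-- The set `M(X,Y)` of continuous maps between spaces with explicitly given topologies. -/
def Cts (X : Type u) (Y : Type w) (tX : TopologicalSpace X) (tY : TopologicalSpace Y) :=
  {f : X → Y // Continuous[tX, tY] f}

/-- The `𝒥`-open topology on `M(X,Y)`, generated by the sets `W(t,U)`. -/
noncomputable def mjTop (J : Type v) [LinearOrder J] {X : Type u} {Y : Type w}
    (tX : TopologicalSpace X) (tY : TopologicalSpace Y) :
    TopologicalSpace (Cts X Y tX tY) :=
  generateFrom {W : Set (Cts X Y tX tY) |
    ∃ I : Set J, AlmostClosed I ∧ ∃ t : WithTop ↥I → X, Continuous[_, tX] t ∧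
      ∃ U : Set Y, IsOpen[tY] U ∧ W = {f | ∀ z : WithTop ↥I, f.1 (t z) ∈ U}}


/-! ### Auxiliary development -/

namespace Stmt8

instance {γ : Type*} [Preorder γ] : OrderTopology (WithTop γ) := ⟨rfl⟩

section SecA

variable {α : Type*} [LinearOrder α] [WellFoundedLT α]

noncomputable def wfmin (s : Set (WithTop α)) (hs : s.Nonempty) : WithTop α :=
  wellFounded_lt.min s hs

lemma wfmin_mem {s : Set (WithTop α)} (hs : s.Nonempty) : wfmin s hs ∈ s :=
  wellFounded_lt.min_mem s hs

lemma wfmin_le {s : Set (WithTop α)} (hs : s.Nonempty) {y} (hy : y ∈ s) : wfmin s hs ≤ y :=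
  not_lt.1 (wellFounded_lt.not_lt_min s hy)

noncomputable def lubW (s : Set (WithTop α)) : WithTop α :=
  wfmin (upperBounds s) ⟨⊤, fun _ _ => le_top⟩

lemma isLUB_lubW (s : Set (WithTop α)) : IsLUB s (lubW s) :=
  ⟨wfmin_mem _, fun _ hu => wfmin_le _ hu⟩

lemma isOpen_Iic' (c : WithTop α) : IsOpen (Iic c) := by
  rcases eq_or_ne c ⊤ with rfl | hc
  · rw [Iic_top]; exact isOpen_univ
  · have hne : {y : WithTop α | c < y}.Nonempty := ⟨⊤, hc.lt_top⟩
    have h : Iic c = Iio (wfmin _ hne) := by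
      ext y
      simp only [mem_Iic, mem_Iio]
      constructor
      · intro hy; exact lt_of_le_of_lt hy (wfmin_mem hne)
      · intro hy
        by_contra h'
        push_neg at h'
        exact absurd (wfmin_le hne h') (not_le.2 hy)
    rw [h]; exact isOpen_Iio

lemma isOpen_Ioc' (b c : WithTop α) : IsOpen (Ioc b c) := by
  rw [← Ioi_inter_Iic]; exact isOpen_Ioi.inter (isOpen_Iic' c)

lemma nhds_shrink {s : Set (WithTop α)} {x : WithTop α} (hs : IsOpen s) (hx : x ∈ s) :
    (∃ b < x, Ioc b x ⊆ s) ∨ (Iic x ⊆ s ∧ ¬∃ b, b < x) := by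
  by_cases h : ∃ b, b < x
  · exact Or.inl (exists_Ioc_subset_of_mem_nhds (hs.mem_nhds hx) h)
  · refine Or.inr ⟨?_, h⟩
    intro y hy
    rcases eq_or_lt_of_le (mem_Iic.1 hy) with rfl | hlt
    · exact hx
    · exact absurd ⟨y, hlt⟩ h

lemma isolated_or_dense (x : WithTop α) :
    IsOpen {x} ∨ ((∃ b, b < x) ∧ ∀ b < x, ∃ y, b < y ∧ y < x) := by
  by_cases hb : ∃ b, b < x
  · by_cases hd : ∀ b < x, ∃ y, b < y ∧ y < x
    · exact Or.inr ⟨hb, hd⟩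
    · push_neg at hd
      obtain ⟨b, hbx, hgap⟩ := hd
      left
      have h : {x} = Ioc b x := by
        ext y
        simp only [mem_singleton_iff, mem_Ioc]
        constructor
        · rintro rfl; exact ⟨hbx, le_rfl⟩
        · rintro ⟨h1, h2⟩
          rcases eq_or_lt_of_le h2 with rfl | hlt
          · rfl
          · exact absurd hlt (not_lt.2 (hgap y h1))
      rw [h]; exact isOpen_Ioc' b x
  · left
    have h : {x} = Iic x := by
      ext y
      simp only [mem_singleton_iff, mem_Iic]
      constructor
      · rintro rfl; exact le_rfl
      · intro hy
        rcases eq_or_lt_of_le hy with rfl | hlt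
        · rfl
        · exact absurd ⟨y, hlt⟩ hb
    rw [h]; exact isOpen_Iic' x

lemma mem_closure_of_dense {S : Set (WithTop α)} {y : WithTop α}
    (hne : ∃ z ∈ S, z ≤ y) (h : ∀ b < y, ∃ z ∈ S, b < z ∧ z ≤ y) : y ∈ closure S := by
  rw [mem_closure_iff]
  intro o ho hyo
  rcases nhds_shrink ho hyo with ⟨b, hb, hsub⟩ | ⟨hsub, _⟩
  · obtain ⟨z, hzS, h1, h2⟩ := h b hb
    exact ⟨z, hsub ⟨h1, h2⟩, hzS⟩
  · obtain ⟨z, hzS, hz⟩ := hne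
    exact ⟨z, hsub hz, hzS⟩

lemma dense_of_mem_closure {S : Set (WithTop α)} {y : WithTop α}
    (hy : y ∈ closure S) (hyS : y ∉ S) :
    (∃ z ∈ S, z < y) ∧ ∀ b < y, ∃ z ∈ S, b < z ∧ z < y := by
  constructor
  · obtain ⟨z, hz1, hz2⟩ := mem_closure_iff.1 hy (Iic y) (isOpen_Iic' y) (mem_Iic.2 le_rfl)
    exact ⟨z, hz2, lt_of_le_of_ne hz1 (by rintro rfl; exact hyS hz2)⟩
  · intro b hb
    obtain ⟨z, hz1, hz2⟩ := mem_closure_iff.1 hy (Ioc b y) (isOpen_Ioc' b y) ⟨hb, le_rfl⟩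
    exact ⟨z, hz2, hz1.1, lt_of_le_of_ne hz1.2 (by rintro rfl; exact hyS hz2)⟩

lemma continuous_crit {β : Type*} [LinearOrder β] [WellFoundedLT β]
    {f : WithTop α → WithTop β} (hmono : Monotone f)
    (hlim : ∀ x : WithTop α, (∃ b, b < x) → (∀ b < x, ∃ y, b < y ∧ y < x) →
      ∀ k < f x, ∃ b < x, ∀ z, b < z → z ≤ x → k < f z) :
    Continuous f := by
  rw [continuous_iff_continuousAt]
  intro x
  rw [ContinuousAt, Filter.tendsto_def]
  intro s hs
  obtain ⟨o, hos, ho, hxo⟩ := mem_nhds_iff.1 hs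
  rcases isolated_or_dense x with hiso | ⟨hne, hdense⟩
  · refine Filter.mem_of_superset (hiso.mem_nhds rfl) ?_
    rintro z rfl
    exact hos hxo
  · rcases nhds_shrink ho hxo with ⟨k, hk, hsub⟩ | ⟨hsub, _⟩
    · obtain ⟨b, hbx, hb⟩ := hlim x hne hdense k hk
      refine Filter.mem_of_superset ((isOpen_Ioc' b x).mem_nhds ⟨hbx, le_rfl⟩) ?_
      intro z hz
      exact hos (hsub ⟨hb z hz.1 hz.2, hmono hz.2⟩)
    · refine Filter.mem_of_superset ((isOpen_Iic' x).mem_nhds (mem_Iic.2 le_rfl)) ?_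
      intro z hz
      exact hos (hsub (hmono hz))

end SecA

end Stmt8

namespace Stmt8

section SecB

variable {J : Type v} [LinearOrder J] [WellFoundedLT J]

/-- image of a set of `J` in `WithTop J`. -/
abbrev img (I : Set J) : Set (WithTop J) := (fun j : J => (j : WithTop J)) '' I

noncomputable def lof (I : Set J) : WithTop J := lubW (img I)

lemma isLUB_lof (I : Set J) : IsLUB (img I) (lof I) := isLUB_lubW _

/-- `y` is approached strictly from below by elements of `I`. -/
def Approa (I : Set J) (y : WithTop J) : Prop :=
  (∃ j ∈ I, (j : WithTop J) < y) ∧ ∀ b < y, ∃ j ∈ I, b < (j : WithTop J) ∧ (j : WithTop J) < y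

lemma ac_spec {I : Set J} (hI : AlmostClosed I) :
    closure (img I) \ img I = {lof I} ∧ IsLeast {s | ∀ i ∈ img I, i < s} (lof I) := by
  obtain ⟨ℓ, h1, h2⟩ := hI
  have hmem : ℓ ∈ closure (img I) \ img I := h1.symm ▸ mem_singleton ℓ
  have hlub : IsLUB (img I) ℓ := by
    constructor
    · exact fun z hz => le_of_lt (h2.1 z hz)
    · intro u hu
      by_contra hlt
      push_neg at hlt
      obtain ⟨z, hz1, hz2⟩ := mem_closure_iff.1 hmem.1 (Ioi u) isOpen_Ioi hlt
      exact absurd (hu hz2) (not_le.2 hz1)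
  have heq : ℓ = lof I := hlub.unique (isLUB_lof I)
  rw [← heq]
  exact ⟨h1, h2⟩

lemma ac_nonempty {I : Set J} (hI : AlmostClosed I) : I.Nonempty := by
  by_contra h
  rw [not_nonempty_iff_eq_empty] at h
  subst h
  have := (ac_spec hI).1
  simp only [image_empty, closure_empty, diff_empty] at this
  exact (singleton_ne_empty _) this.symm

lemma ac_lt_lof {I : Set J} (hI : AlmostClosed I) {j : J} (hj : j ∈ I) :
    (j : WithTop J) < lof I :=
  (ac_spec hI).2.1 _ ⟨j, hj, rfl⟩

lemma lof_not_mem {I : Set J} (hI : AlmostClosed I) : lof I ∉ img I := by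
  rintro ⟨j, hj, hje⟩
  have hje' : (j : WithTop J) = lof I := hje
  have := ac_lt_lof hI hj
  rw [hje'] at this
  exact lt_irrefl _ this

lemma lof_mem_closure {I : Set J} (hI : AlmostClosed I) : lof I ∈ closure (img I) := by
  have := (ac_spec hI).1
  have h : lof I ∈ closure (img I) \ img I := this.symm ▸ mem_singleton _
  exact h.1

lemma ac_nomax {I : Set J} (hI : AlmostClosed I) {j : J} (hj : j ∈ I) :
    ∃ j' ∈ I, j < j' := by
  obtain ⟨z, hz1, hz2⟩ := mem_closure_iff.1 (lof_mem_closure hI) (Ioi (j : WithTop J))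
    isOpen_Ioi (ac_lt_lof hI hj)
  obtain ⟨j', hj', rfl⟩ := hz2
  exact ⟨j', hj', WithTop.coe_lt_coe.1 hz1⟩

lemma ac_limitclosed {I : Set J} (hI : AlmostClosed I) {y : WithTop J}
    (hy : y < lof I) (happ : Approa I y) : ∃ j ∈ I, (j : WithTop J) = y := by
  have hycl : y ∈ closure (img I) := by
    apply mem_closure_of_dense
    · obtain ⟨j, hj, hjy⟩ := happ.1
      exact ⟨j, ⟨j, hj, rfl⟩, le_of_lt hjy⟩
    · intro b hb
      obtain ⟨j, hj, h1, h2⟩ := happ.2 b hb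
      exact ⟨j, ⟨j, hj, rfl⟩, h1, le_of_lt h2⟩
  by_contra h
  push_neg at h
  have hmem : y ∈ closure (img I) \ img I := by
    refine ⟨hycl, ?_⟩
    rintro ⟨j, hj, rfl⟩
    exact h j hj rfl
  rw [(ac_spec hI).1] at hmem
  exact absurd (mem_singleton_iff.1 hmem) (ne_of_lt hy)

lemma ac_approa_lof {I : Set J} (hne : I.Nonempty)
    (hnomax : ∀ j ∈ I, ∃ j' ∈ I, j < j') : Approa I (lof I) := by
  constructor
  · obtain ⟨j, hj⟩ := hne
    refine ⟨j, hj, ?_⟩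
    rcases eq_or_lt_of_le ((isLUB_lof I).1 ⟨j, hj, rfl⟩) with heq | h
    · obtain ⟨j', hj', hlt⟩ := hnomax j hj
      have := (isLUB_lof I).1 (⟨j', hj', rfl⟩ : (j' : WithTop J) ∈ img I)
      rw [← heq] at this
      exact absurd (WithTop.coe_le_coe.1 this) (not_le.2 hlt)
    · exact h
  · intro b hb
    have hbub : b ∉ upperBounds (img I) := fun hub => absurd ((isLUB_lof I).2 hub) (not_le.2 hb)
    rw [mem_upperBounds] at hbub
    push_neg at hbub
    obtain ⟨z, ⟨j, hj, rfl⟩, hzb⟩ := hbub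
    rcases eq_or_lt_of_le ((isLUB_lof I).1 (⟨j, hj, rfl⟩ : (j:WithTop J) ∈ img I)) with heq | h
    · obtain ⟨j', hj', hlt⟩ := hnomax j hj
      have h2 := (isLUB_lof I).1 (⟨j', hj', rfl⟩ : (j' : WithTop J) ∈ img I)
      rw [← heq] at h2
      exact absurd (WithTop.coe_le_coe.1 h2) (not_le.2 hlt)
    · exact ⟨j, hj, hzb, h⟩

lemma ac_build {I : Set J} (hne : I.Nonempty)
    (hnomax : ∀ j ∈ I, ∃ j' ∈ I, j < j')
    (hlc : ∀ y < lof I, Approa I y → ∃ j ∈ I, (j : WithTop J) = y) : AlmostClosed I := by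
  have hnm : lof I ∉ img I := by
    rintro ⟨j, hj, hje⟩
    obtain ⟨j', hj', hlt⟩ := hnomax j hj
    have h2 := (isLUB_lof I).1 (⟨j', hj', rfl⟩ : (j' : WithTop J) ∈ img I)
    rw [← hje] at h2
    exact absurd (WithTop.coe_le_coe.1 h2) (not_le.2 hlt)
  refine ⟨lof I, ?_, ?_, ?_⟩
  · apply Subset.antisymm
    · rintro y ⟨hycl, hynotin⟩
      have hyle : y ≤ lof I :=
        (closure_minimal (fun z hz => (isLUB_lof I).1 hz) isClosed_Iic) hycl
      rcases eq_or_lt_of_le hyle with rfl | hlt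
      · exact mem_singleton _
      · obtain ⟨hex, hden⟩ := dense_of_mem_closure hycl hynotin
        have happ : Approa I y := by
          constructor
          · obtain ⟨z, ⟨j, hj, rfl⟩, hz⟩ := hex
            exact ⟨j, hj, hz⟩
          · intro b hb
            obtain ⟨z, ⟨j, hj, rfl⟩, h1, h2⟩ := hden b hb
            exact ⟨j, hj, h1, h2⟩
        obtain ⟨j, hj, rfl⟩ := hlc y hlt happ
        exact absurd ⟨j, hj, rfl⟩ hynotin
    · rintro y hy
      rw [mem_singleton_iff] at hy
      subst hy
      refine ⟨?_, hnm⟩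
      apply mem_closure_of_dense
      · obtain ⟨j, hj⟩ := hne
        exact ⟨j, ⟨j, hj, rfl⟩, (isLUB_lof I).1 ⟨j, hj, rfl⟩⟩
      · intro b hb
        obtain ⟨j, hj, h1, h2⟩ := (ac_approa_lof hne hnomax).2 b hb
        exact ⟨j, ⟨j, hj, rfl⟩, h1, le_of_lt h2⟩
  · intro i hi
    exact lt_of_le_of_ne ((isLUB_lof I).1 hi) (by rintro rfl; exact hnm hi)
  · intro s hs
    exact (isLUB_lof I).2 (fun z hz => le_of_lt (hs z hz))

lemma ac_approa {I : Set J} (hI : AlmostClosed I) : Approa I (lof I) :=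
  ac_approa_lof (ac_nonempty hI) (fun _ hj => ac_nomax hI hj)

end SecB

end Stmt8

namespace Stmt8

section SecC

set_option linter.unusedSectionVars false

variable {J : Type v} [LinearOrder J] [WellFoundedLT J]

lemma top_mem_closure_range {I : Set J} (hI : AlmostClosed I) :
    (⊤ : WithTop ↥I) ∈ closure (Set.range (fun i : ↥I => (WithTop.some i : WithTop ↥I))) := by
  apply mem_closure_of_dense
  · obtain ⟨j, hj⟩ := ac_nonempty hI
    exact ⟨WithTop.some ⟨j, hj⟩, ⟨⟨j, hj⟩, rfl⟩, le_top⟩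
  · intro b hb
    induction b using WithTop.recTopCoe with
    | top => exact absurd hb (lt_irrefl _)
    | coe i =>
      obtain ⟨j', hj', hlt⟩ := ac_nomax hI i.2
      refine ⟨WithTop.some ⟨j', hj'⟩, ⟨⟨j', hj'⟩, rfl⟩, ?_, le_top⟩
      exact WithTop.coe_lt_coe.2 (Subtype.mk_lt_mk.2 hlt)

lemma path_limit_mem {X : Type*} [tX : TopologicalSpace X] {I : Set J} (hI : AlmostClosed I)
    {g : WithTop ↥I → X} (hg : Continuous g) {C : Set X} (hC : IsClosed C)
    (hv : ∀ i : ↥I, g (WithTop.some i) ∈ C) : g ⊤ ∈ C := by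
  have h1 : Set.range (fun i : ↥I => (WithTop.some i : WithTop ↥I)) ⊆ g ⁻¹' C := by
    rintro z ⟨i, rfl⟩; exact hv i
  exact (closure_minimal h1 (hC.preimage hg)) (top_mem_closure_range hI)

lemma jclosed_of_closed {X : Type*} [tX : TopologicalSpace X] {C : Set X} (hC : IsClosed C) :
    JClosedSet J X C :=
  fun _ hI _ hf hv => path_limit_mem hI hf hC hv

/-- The canonical monotone embedding of `WithTop ↥L` into `WithTop J`, sending `⊤` to
the least upper bound of `L`. -/
noncomputable def embL (L : Set J) : WithTop ↥L → WithTop J :=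
  fun z => WithTop.recTopCoe (lof L) (fun l => (l.1 : WithTop J)) z

@[simp] lemma embL_coe (L : Set J) (l : ↥L) : embL L (WithTop.some l) = (l.1 : WithTop J) := rfl
@[simp] lemma embL_top (L : Set J) : embL L ⊤ = lof L := rfl

lemma embL_lt_iff {L : Set J} (hL : AlmostClosed L) {a b : WithTop ↥L} :
    embL L a < embL L b ↔ a < b := by
  induction a using WithTop.recTopCoe with
  | top =>
    induction b using WithTop.recTopCoe with
    | top => simp
    | coe l =>
      simp only [embL_top, embL_coe]
      constructor
      · intro h; exact absurd (le_of_lt (ac_lt_lof hL l.2)) (not_le.2 h)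
      · intro h; exact absurd h (by simp)
  | coe l1 =>
    induction b using WithTop.recTopCoe with
    | top =>
      simp only [embL_top, embL_coe]
      constructor
      · intro _; exact WithTop.coe_lt_top l1
      · intro _; exact ac_lt_lof hL l1.2
    | coe l2 =>
      simp only [embL_coe, WithTop.coe_lt_coe]
      exact ⟨fun h => Subtype.mk_lt_mk.2 h, fun h => Subtype.mk_lt_mk.1 h⟩

variable {L M : Set J}

noncomputable def nuM (hLM : ∀ j ∈ L, j ∈ M) : WithTop ↥M :=
  wfmin {p : WithTop ↥M | ∀ j, ∀ hj : j ∈ L, (WithTop.some ⟨j, hLM j hj⟩) < p}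
    ⟨⊤, fun _ _ => WithTop.coe_lt_top _⟩

lemma some_lt_nuM (hLM : ∀ j ∈ L, j ∈ M) (j : J) (hj : j ∈ L) :
    WithTop.some ⟨j, hLM j hj⟩ < nuM hLM := by
  have h : nuM hLM ∈ {p : WithTop ↥M | ∀ j, ∀ hj : j ∈ L, (WithTop.some ⟨j, hLM j hj⟩) < p} :=
    wfmin_mem _
  exact h j hj

lemma nuM_le (hLM : ∀ j ∈ L, j ∈ M) {c : WithTop ↥M}
    (hc : ∀ j, ∀ hj : j ∈ L, WithTop.some ⟨j, hLM j hj⟩ < c) : nuM hLM ≤ c :=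
  wfmin_le _ hc

lemma nuM_eq (hLM : ∀ j ∈ L, j ∈ M) {c : WithTop ↥M}
    (hlt : ∀ j, ∀ hj : j ∈ L, WithTop.some ⟨j, hLM j hj⟩ < c)
    (happ : ∀ b < c, ∃ j, ∃ hj : j ∈ L, b < WithTop.some ⟨j, hLM j hj⟩) :
    nuM hLM = c := by
  refine le_antisymm (nuM_le hLM hlt) ?_
  by_contra h
  push_neg at h
  obtain ⟨j, hj, hlt2⟩ := happ _ h
  exact absurd (some_lt_nuM hLM j hj) (not_lt.2 (le_of_lt hlt2))

noncomputable def inclMap (hLM : ∀ j ∈ L, j ∈ M) : WithTop ↥L → WithTop ↥M :=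
  fun z => WithTop.recTopCoe (nuM hLM) (fun l => WithTop.some ⟨l.1, hLM l.1 l.2⟩) z

@[simp] lemma inclMap_coe (hLM : ∀ j ∈ L, j ∈ M) (l : ↥L) :
    inclMap hLM (WithTop.some l) = WithTop.some ⟨l.1, hLM l.1 l.2⟩ := rfl
@[simp] lemma inclMap_top (hLM : ∀ j ∈ L, j ∈ M) : inclMap hLM ⊤ = nuM hLM := rfl

lemma inclMap_mono (hLM : ∀ j ∈ L, j ∈ M) : Monotone (inclMap hLM) := by
  intro a b hab
  induction b using WithTop.recTopCoe with
  | top =>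
    induction a using WithTop.recTopCoe with
    | top => exact le_rfl
    | coe l => exact le_of_lt (some_lt_nuM hLM l.1 l.2)
  | coe l2 =>
    induction a using WithTop.recTopCoe with
    | top => exact absurd hab (WithTop.not_top_le_coe _)
    | coe l1 =>
      simp only [inclMap_coe]
      have h := WithTop.coe_le_coe.1 hab
      exact WithTop.coe_le_coe.2 (Subtype.mk_le_mk.2 (Subtype.coe_le_coe.2 h))

/-- at a non-isolated point of `WithTop ↥L`, the corresponding point of `WithTop J`
is approached by `L`. -/
lemma dense_approa {L : Set J} (hL : AlmostClosed L) {x : WithTop ↥L}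
    (hne : ∃ b, b < x) (hdense : ∀ b < x, ∃ y, b < y ∧ y < x) :
    Approa L (embL L x) := by
  induction x using WithTop.recTopCoe with
  | top =>
    rw [embL_top]
    exact ac_approa hL
  | coe l₀ =>
    rw [embL_coe]
    set L' := {j ∈ L | j < l₀.1} with hL'def
    have hne' : L'.Nonempty := by
      obtain ⟨b, hb⟩ := hne
      induction b using WithTop.recTopCoe with
      | top => exact absurd hb (by simp)
      | coe l1 => exact ⟨l1.1, l1.2, Subtype.mk_lt_mk.1 (WithTop.coe_lt_coe.1 hb)⟩
    have hnomax' : ∀ j ∈ L', ∃ j' ∈ L', j < j' := by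
      rintro j ⟨hjL, hjlt⟩
      obtain ⟨y, hy1, hy2⟩ := hdense (WithTop.some ⟨j, hjL⟩)
        (WithTop.coe_lt_coe.2 (Subtype.mk_lt_mk.2 hjlt))
      induction y using WithTop.recTopCoe with
      | top => exact absurd hy2 (by simp)
      | coe l2 =>
        refine ⟨l2.1, ⟨l2.2, Subtype.mk_lt_mk.1 (WithTop.coe_lt_coe.1 hy2)⟩, ?_⟩
        exact Subtype.mk_lt_mk.1 (WithTop.coe_lt_coe.1 hy1)
    have happ' := ac_approa_lof hne' hnomax'
    have hle : lof L' ≤ (l₀.1 : WithTop J) := by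
      apply (isLUB_lof L').2
      rintro z ⟨j, hj, rfl⟩
      exact le_of_lt (WithTop.coe_lt_coe.2 hj.2)
    rcases eq_or_lt_of_le hle with heq | hlt
    · constructor
      · obtain ⟨j, hj⟩ := hne'
        exact ⟨j, hj.1, WithTop.coe_lt_coe.2 hj.2⟩
      · intro b hb
        rw [← heq] at hb
        obtain ⟨j, hj, h1, h2⟩ := happ'.2 b hb
        exact ⟨j, hj.1, h1, h2.trans_le hle⟩
    · exfalso
      have happL : Approa L (lof L') := by
        constructor
        · obtain ⟨j, hj, h⟩ := happ'.1
          exact ⟨j, hj.1, h⟩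
        · intro b hb
          obtain ⟨j, hj, h1, h2⟩ := happ'.2 b hb
          exact ⟨j, hj.1, h1, h2⟩
      have hlt2 : lof L' < lof L := lt_trans hlt (ac_lt_lof hL l₀.2)
      obtain ⟨j₀, hj₀, hje⟩ := ac_limitclosed hL hlt2 happL
      have hj₀lt : j₀ < l₀.1 := by
        have : (j₀ : WithTop J) < (l₀.1 : WithTop J) := hje ▸ hlt
        exact WithTop.coe_lt_coe.1 this
      obtain ⟨j', hj', hlt'⟩ := hnomax' j₀ ⟨hj₀, hj₀lt⟩
      have : (j' : WithTop J) ≤ lof L' := (isLUB_lof L').1 ⟨j', hj', rfl⟩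
      rw [← hje] at this
      exact absurd (WithTop.coe_le_coe.1 this) (not_le.2 hlt')

lemma inclMap_continuous (hL : AlmostClosed L) (hLM : ∀ j ∈ L, j ∈ M) :
    Continuous (inclMap hLM) := by
  apply continuous_crit (inclMap_mono hLM)
  intro x hne hdense k hk
  have happ := dense_approa hL hne hdense
  induction x using WithTop.recTopCoe with
  | top =>
    have hkn : ¬ (∀ j, ∀ hj : j ∈ L, WithTop.some ⟨j, hLM j hj⟩ < k) := fun hc =>
      absurd (nuM_le hLM hc) (not_le.2 hk)
    push_neg at hkn
    obtain ⟨j, hj, hjk⟩ := hkn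
    obtain ⟨j₂, hj₂, hltj⟩ := ac_nomax hL hj
    refine ⟨WithTop.some ⟨j₂, hj₂⟩, WithTop.coe_lt_top _, ?_⟩
    intro z hz1 _
    induction z using WithTop.recTopCoe with
    | top =>
      exact lt_of_le_of_lt hjk (some_lt_nuM hLM j hj)
    | coe l3 =>
      rw [inclMap_coe]
      refine lt_of_le_of_lt hjk ?_
      refine WithTop.coe_lt_coe.2 (Subtype.mk_lt_mk.2 ?_)
      exact lt_trans hltj (Subtype.mk_lt_mk.1 (WithTop.coe_lt_coe.1 hz1))
  | coe l₀ =>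
    rw [inclMap_coe] at hk
    induction k using WithTop.recTopCoe with
    | top => exact absurd hk (by simp)
    | coe m₀ =>
      have hm₀ : (m₀.1 : WithTop J) < (l₀.1 : WithTop J) := by
        exact_mod_cast Subtype.mk_lt_mk.1 (WithTop.coe_lt_coe.1 hk)
      rw [embL_coe] at happ
      obtain ⟨j, hjL, h1, h2⟩ := happ.2 _ hm₀
      refine ⟨WithTop.some ⟨j, hjL⟩, WithTop.coe_lt_coe.2 (Subtype.mk_lt_mk.2 (by exact_mod_cast h2)), ?_⟩
      intro z hz1 hz2
      induction z using WithTop.recTopCoe with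
      | top => exact absurd hz2 (by simp)
      | coe l3 =>
        rw [inclMap_coe]
        refine WithTop.coe_lt_coe.2 (Subtype.mk_lt_mk.2 ?_)
        have : j < l3.1 := Subtype.mk_lt_mk.1 (WithTop.coe_lt_coe.1 hz1)
        calc m₀.1 < j := by exact_mod_cast h1
        _ < l3.1 := this

lemma limclosed {R : Set J}
    (hstep : ∀ L : Set J, (∀ j ∈ L, j ∈ R) → AlmostClosed L → ∀ x : J,
      IsLUB (img L) ↑x → x ∈ R) :
    ∀ x : J, Approa R ↑x → x ∈ R := by
  intro x
  induction x using WellFoundedLT.induction with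
  | ind x IH =>
    intro hx
    set L := {r ∈ R | r < x} with hLdef
    have hsub : ∀ j ∈ L, j ∈ R := fun j hj => hj.1
    have hne : L.Nonempty := by
      obtain ⟨j, hj, hjx⟩ := hx.1
      exact ⟨j, hj, WithTop.coe_lt_coe.1 hjx⟩
    have hnomax : ∀ j ∈ L, ∃ j' ∈ L, j < j' := by
      rintro j ⟨hjR, hjx⟩
      obtain ⟨j', hj', h1, h2⟩ := hx.2 ↑j (WithTop.coe_lt_coe.2 hjx)
      exact ⟨j', ⟨hj', WithTop.coe_lt_coe.1 h2⟩, WithTop.coe_lt_coe.1 h1⟩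
    have hlub : IsLUB (img L) (↑x : WithTop J) := by
      constructor
      · rintro z ⟨j, hj, rfl⟩
        exact le_of_lt (WithTop.coe_lt_coe.2 hj.2)
      · intro u hu
        by_contra hc
        push_neg at hc
        obtain ⟨j, hj, h1, h2⟩ := hx.2 u hc
        exact absurd (hu ⟨j, ⟨hj, WithTop.coe_lt_coe.1 h2⟩, rfl⟩) (not_le.2 h1)
    have hacL : AlmostClosed L := by
      have hlofL : lof L = ↑x := (isLUB_lof L).unique hlub
      apply ac_build hne hnomax
      intro y hy happy
      rw [hlofL] at hy
      induction y using WithTop.recTopCoe with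
      | top => exact absurd hy (by simp)
      | coe y' =>
        have hy'x : y' < x := WithTop.coe_lt_coe.1 hy
        have happR : Approa R ↑y' := by
          constructor
          · obtain ⟨j, hj, h⟩ := happy.1
            exact ⟨j, hj.1, h⟩
          · intro b hb
            obtain ⟨j, hj, h1, h2⟩ := happy.2 b hb
            exact ⟨j, hj.1, h1, h2⟩
        exact ⟨y', ⟨IH y' hy'x happR, hy'x⟩, rfl⟩
    exact hstep L hsub hacL x hlub

lemma reach {R : Set J} {γ : WithTop J}
    (hsub : ∀ j ∈ R, (j : WithTop J) < γ) (happ : Approa R γ)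
    (hstep : ∀ L : Set J, (∀ j ∈ L, j ∈ R) → AlmostClosed L → ∀ x : J,
      IsLUB (img L) ↑x → x ∈ R) :
    AlmostClosed R ∧ lof R = γ := by
  have hne : R.Nonempty := by obtain ⟨j, hj, _⟩ := happ.1; exact ⟨j, hj⟩
  have hnomax : ∀ j ∈ R, ∃ j' ∈ R, j < j' := by
    intro j hj
    obtain ⟨j', hj', h1, _⟩ := happ.2 ↑j (hsub j hj)
    exact ⟨j', hj', WithTop.coe_lt_coe.1 h1⟩
  have hlub : IsLUB (img R) γ := by
    constructor
    · rintro z ⟨j, hj, rfl⟩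
      exact le_of_lt (hsub j hj)
    · intro u hu
      by_contra hc
      push_neg at hc
      obtain ⟨j, hj, h1, _⟩ := happ.2 u hc
      exact absurd (hu ⟨j, hj, rfl⟩) (not_le.2 h1)
  have hlof : lof R = γ := (isLUB_lof R).unique hlub
  refine ⟨?_, hlof⟩
  apply ac_build hne hnomax
  intro y hy happy
  rw [hlof] at hy
  induction y using WithTop.recTopCoe with
  | top => exact absurd hy not_top_lt
  | coe y' => exact ⟨y', limclosed hstep y' happy, rfl⟩

end SecC

end Stmt8

namespace Stmt8

section SecD

set_option linter.unusedSectionVars false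

variable {J : Type v} [LinearOrder J] [WellFoundedLT J]

lemma jconv_TT {M : Set J} (hM : AlmostClosed M) : IsJConvergence J (WithTop ↥M) := by
  intro A hA
  by_contra hno
  push_neg at hno
  obtain ⟨c, hccl, hcA⟩ : ∃ c, c ∈ closure A ∧ c ∉ A := by
    by_contra h
    push_neg at h
    exact hA (isClosed_of_closure_subset h)
  have hciso : ¬ IsOpen ({c} : Set (WithTop ↥M)) := by
    intro hop
    obtain ⟨z, hz1, hz2⟩ := mem_closure_iff.1 hccl {c} hop rfl
    rw [mem_singleton_iff] at hz1
    exact hcA (hz1 ▸ hz2)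
  obtain ⟨hne, hdense⟩ := (isolated_or_dense c).resolve_left hciso
  set γ := embL M c with hγ
  set R := {j : J | ∃ m : ↥M, m.1 = j ∧ WithTop.some m ∈ A ∧ WithTop.some m < c} with hRdef
  have hRM : ∀ j ∈ R, j ∈ M := by rintro j ⟨m, rfl, _, _⟩; exact m.2
  have hRlt : ∀ j (hj : j ∈ R), WithTop.some (⟨j, hRM j hj⟩ : ↥M) < c := by
    rintro j ⟨m, rfl, hmA, hmc⟩; exact hmc
  have hRA : ∀ j (hj : j ∈ R), WithTop.some (⟨j, hRM j hj⟩ : ↥M) ∈ A := by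
    rintro j ⟨m, rfl, hmA, hmc⟩; exact hmA
  have hsub : ∀ j ∈ R, (j : WithTop J) < γ := by
    intro j hj
    have h2 := (embL_lt_iff hM).2 (hRlt j hj)
    rwa [embL_coe] at h2
  have hbelow : ∀ y < c, ∃ j, ∃ hj : j ∈ R, y < WithTop.some (⟨j, hRM j hj⟩ : ↥M) := by
    intro y hy
    obtain ⟨z, hz1, hz2⟩ := mem_closure_iff.1 hccl (Ioc y c) (isOpen_Ioc' y c) ⟨hy, le_rfl⟩
    have hzc : z < c := lt_of_le_of_ne hz1.2 (fun h => hcA (h ▸ hz2))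
    obtain ⟨m, hm⟩ := WithTop.ne_top_iff_exists.1 (ne_top_of_lt hzc)
    refine ⟨m.1, ⟨m, rfl, ?_, ?_⟩, ?_⟩
    · rw [hm]; exact hz2
    · rw [hm]; exact hzc
    · show y < WithTop.some _
      have : WithTop.some (⟨m.1, _⟩ : ↥M) = z := hm
      rw [this]; exact hz1.1
  have happ : Approa R γ := by
    constructor
    · obtain ⟨b, hb⟩ := hne
      obtain ⟨j, hj, _⟩ := hbelow b hb
      exact ⟨j, hj, hsub j hj⟩
    · intro b hb
      have hyex : ∃ y < c, b < embL M y := by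
        induction c using WithTop.recTopCoe with
        | top =>
          obtain ⟨m', hm', h1, h2⟩ := (ac_approa hM).2 b hb
          exact ⟨WithTop.some ⟨m', hm'⟩, WithTop.coe_lt_top _, by rw [embL_coe]; exact h1⟩
        | coe mstar =>
          have happM := dense_approa hM hne hdense
          rw [embL_coe] at happM
          obtain ⟨m', hm', h1, h2⟩ := happM.2 b hb
          refine ⟨WithTop.some ⟨m', hm'⟩, ?_, by rw [embL_coe]; exact h1⟩
          exact WithTop.coe_lt_coe.2 (Subtype.mk_lt_mk.2 (WithTop.coe_lt_coe.1 h2))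
      obtain ⟨y, hyc, hby⟩ := hyex
      obtain ⟨j, hj, hyj⟩ := hbelow y hyc
      refine ⟨j, hj, ?_, hsub j hj⟩
      have : embL M y < embL M (WithTop.some ⟨j, hRM j hj⟩) := (embL_lt_iff hM).2 hyj
      rw [embL_coe] at this
      exact lt_trans hby this
  have hstep : ∀ L : Set J, (∀ j ∈ L, j ∈ R) → AlmostClosed L → ∀ x : J,
      IsLUB (img L) ↑x → x ∈ R := by
    intro L hLR hacL x hlubx
    have hLM : ∀ j ∈ L, j ∈ M := fun j hj => hRM j (hLR j hj)
    have hLlt : ∀ l ∈ L, (l : WithTop J) < ↑x := by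
      intro l hl
      rcases eq_or_lt_of_le (hlubx.1 ⟨l, hl, rfl⟩) with heq | h
      · exfalso
        obtain ⟨l', hl', hlt⟩ := ac_nomax hacL hl
        have h3 := hlubx.1 (⟨l', hl', rfl⟩ : (↑l' : WithTop J) ∈ img L)
        rw [← heq] at h3
        exact absurd (WithTop.coe_le_coe.1 h3) (not_le.2 hlt)
      · exact h
    have hvals : ∀ l : ↥L, inclMap hLM (WithTop.some l) ∈ A := by
      intro l
      rw [inclMap_coe]
      exact hRA l.1 (hLR l.1 l.2)
    have hνc : nuM hLM ≤ c := nuM_le hLM (fun j hj => hRlt j (hLR j hj))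
    have hLub : ∀ b : WithTop J, b < ↑x → ∃ l ∈ L, b < ↑l := by
      intro b hb
      by_contra hcon
      push_neg at hcon
      have : (↑x : WithTop J) ≤ b := hlubx.2 (by rintro z ⟨l, hl, rfl⟩; exact hcon l hl)
      exact absurd hb (not_lt.2 this)
    by_cases hxM : (↑x : WithTop J) = lof M
    · exfalso
      have hν : nuM hLM = ⊤ := by
        apply nuM_eq hLM (fun j hj => WithTop.coe_lt_top _)
        intro b hb
        obtain ⟨m, hm⟩ := WithTop.ne_top_iff_exists.1 (ne_top_of_lt hb)
        have hmx : (m.1 : WithTop J) < ↑x := by rw [hxM]; exact ac_lt_lof hM m.2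
        obtain ⟨l, hl, hlgt⟩ := hLub _ hmx
        refine ⟨l, hl, ?_⟩
        rw [← hm]
        exact WithTop.coe_lt_coe.2 (Subtype.mk_lt_mk.2 (WithTop.coe_lt_coe.1 hlgt))
      have htopA : (⊤ : WithTop ↥M) ∈ A := by
        have h4 := hno L hacL (inclMap hLM) (inclMap_continuous hacL hLM) hvals
        rwa [inclMap_top, hν] at h4
      have hceq : c = ⊤ := top_le_iff.1 (hν ▸ hνc)
      exact hcA (hceq ▸ htopA)
    · have hxlt : (↑x : WithTop J) < lof M := by
        rcases lt_or_ge (↑x : WithTop J) (lof M) with h | h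
        · exact h
        · exact absurd (le_antisymm (hlubx.2 (by
            rintro z ⟨l, hl, rfl⟩
            exact le_of_lt (ac_lt_lof hM (hLM l hl)))) h) hxM
      have happM : Approa M ↑x := by
        constructor
        · obtain ⟨l, hl⟩ := ac_nonempty hacL
          exact ⟨l, hLM l hl, hLlt l hl⟩
        · intro b hb
          obtain ⟨l, hl, hlgt⟩ := hLub b hb
          exact ⟨l, hLM l hl, hlgt, hLlt l hl⟩
      obtain ⟨x', hx'M, hx'e⟩ := ac_limitclosed hM hxlt happM
      have hxx : x' = x := by exact_mod_cast hx'e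
      subst hxx
      have hν : nuM hLM = WithTop.some ⟨x', hx'M⟩ := by
        apply nuM_eq hLM
        · intro j hj
          exact WithTop.coe_lt_coe.2 (Subtype.mk_lt_mk.2 (WithTop.coe_lt_coe.1 (hLlt j hj)))
        · intro b hb
          obtain ⟨m, hm⟩ := WithTop.ne_top_iff_exists.1 (ne_top_of_lt hb)
          have hmx : (m.1 : WithTop J) < ↑x' := by
            have : m < (⟨x', hx'M⟩ : ↥M) := by rw [← WithTop.coe_lt_coe, hm]; exact hb
            exact_mod_cast Subtype.coe_lt_coe.2 this
          obtain ⟨l, hl, hlgt⟩ := hLub _ hmx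
          refine ⟨l, hl, ?_⟩
          rw [← hm]
          exact WithTop.coe_lt_coe.2 (Subtype.mk_lt_mk.2 (WithTop.coe_lt_coe.1 hlgt))
      have hA' : WithTop.some ⟨x', hx'M⟩ ∈ A := by
        have h4 := hno L hacL (inclMap hLM) (inclMap_continuous hacL hLM) hvals
        rwa [inclMap_top, hν] at h4
      have hltc : WithTop.some ⟨x', hx'M⟩ < c :=
        lt_of_le_of_ne (hν ▸ hνc) (fun h => hcA (h ▸ hA'))
      exact ⟨⟨x', hx'M⟩, rfl, hA', hltc⟩
  obtain ⟨hacR, hlofR⟩ := reach hsub happ hstep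
  have hν : nuM hRM = c := by
    apply nuM_eq
    · exact fun j hj => hRlt j hj
    · intro b hb
      have hbγ : embL M b < γ := (embL_lt_iff hM).2 hb
      obtain ⟨j, hj, h1, _⟩ := happ.2 _ hbγ
      refine ⟨j, hj, ?_⟩
      have h3 : embL M b < embL M (WithTop.some ⟨j, hRM j hj⟩) := by rw [embL_coe]; exact h1
      exact (embL_lt_iff hM).1 h3
  have h4 := hno R hacR (inclMap hRM) (inclMap_continuous hacR hRM)
    (fun l => by rw [inclMap_coe]; exact hRA l.1 l.2)
  rw [inclMap_top, hν] at h4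
  exact hcA h4

variable {X : Type*}

lemma jTop_def (t : TopologicalSpace X) :
    @jTop J _ X t = generateFrom {U | @JOpenSet J _ X t U} := rfl

lemma cont_mono_rng {A : Type*} {B : Type*} {t : TopologicalSpace A}
    {t1 t2 : TopologicalSpace B} (h : t1 ≤ t2) {f : A → B}
    (hf : Continuous[t, t1] f) : Continuous[t, t2] f := by
  rw [continuous_def] at hf ⊢
  exact fun s hs => hf s (hs.mono h)

lemma comp' {A : Type*} {B : Type*} {C : Type*} {tA : TopologicalSpace A}
    {tB : TopologicalSpace B} {tC : TopologicalSpace C} {f : B → C} {g : A → B}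
    (hf : Continuous[tB, tC] f) (hg : Continuous[tA, tB] g) :
    Continuous[tA, tC] (fun a => f (g a)) := by
  rw [continuous_def] at hf hg ⊢
  exact fun s hs => hg _ (hf s hs)

lemma jTop_le (t : TopologicalSpace X) : @jTop J _ X t ≤ t := by
  conv_rhs => rw [← generateFrom_setOf_isOpen t]
  apply generateFrom_anti
  intro U hU
  exact @jclosed_of_closed J _ _ X t _ (@IsOpen.isClosed_compl X t U hU)

lemma isClosed_jTop_of_jclosed {t : TopologicalSpace X} {C : Set X}
    (hC : @JClosedSet J _ X t C) : IsClosed[@jTop J _ X t] C := by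
  rw [← @isOpen_compl_iff X C (@jTop J _ X t)]
  exact @isOpen_generateFrom_of_mem X {U | @JOpenSet J _ X t U} Cᶜ
    (show @JClosedSet J _ X t Cᶜᶜ by rwa [compl_compl])

lemma continuous_jTop_of_continuous {Y : Type w} {tX : TopologicalSpace X}
    {tY : TopologicalSpace Y} {g : X → Y} (hg : Continuous[tX, tY] g) :
    Continuous[@jTop J _ X tX, @jTop J _ Y tY] g := by
  rw [jTop_def (J := J) tY, continuous_generateFrom_iff]
  intro U hU
  have hcl : @JClosedSet J _ X tX (g ⁻¹' U)ᶜ := by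
    intro I hI f hf hv
    exact hU I hI (g ∘ f) (hg.comp hf) hv
  have := @isClosed_jTop_of_jclosed J _ _ X tX _ hcl
  rw [← @isOpen_compl_iff X ((g ⁻¹' U)ᶜ) (@jTop J _ X tX)] at this
  rwa [compl_compl] at this

lemma continuous_into_jTop {I : Set J} (hI : AlmostClosed I) {t : TopologicalSpace X}
    {f : WithTop ↥I → X} (hf : Continuous[_, t] f) : Continuous[_, @jTop J _ X t] f := by
  rw [jTop_def (J := J) t, continuous_generateFrom_iff]
  intro U hU
  by_contra hop
  have hnc : ¬ IsClosed ((f ⁻¹' U)ᶜ) := fun h => hop (by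
    have := h.isOpen_compl
    rwa [compl_compl] at this)
  obtain ⟨L, hacL, q, hq, hqv, hqt⟩ := jconv_TT hI _ hnc
  exact hqt (hU L hacL (f ∘ q) (hf.comp hq) hqv)

lemma jclosed_jTop_iff {t : TopologicalSpace X} {C : Set X} :
    @JClosedSet J _ X (@jTop J _ X t) C ↔ @JClosedSet J _ X t C := by
  constructor
  · intro h I hI f hf hv
    exact h I hI f (continuous_into_jTop hI hf) hv
  · intro h I hI f hf hv
    exact h I hI f (cont_mono_rng (jTop_le t) hf) hv

lemma jTop_idem (t : TopologicalSpace X) :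
    @jTop J _ X (@jTop J _ X t) = @jTop J _ X t := by
  rw [jTop_def (J := J) (@jTop J _ X t), jTop_def (J := J) t]
  congr 1
  ext U
  show @JClosedSet J _ X (@jTop J _ X t) Uᶜ ↔ @JClosedSet J _ X t Uᶜ
  exact jclosed_jTop_iff

lemma closed_of_jclosed {t : TopologicalSpace X} (hX : @IsJConvergence J _ X t) {C : Set X}
    (h : @JClosedSet J _ X t C) : IsClosed[t] C := by
  by_contra hc
  obtain ⟨I, hI, f, hf, hv, ht⟩ := hX C hc
  exact ht (h I hI f hf hv)

lemma jTop_eq {t : TopologicalSpace X} (hX : @IsJConvergence J _ X t) :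
    @jTop J _ X t = t := by
  refine le_antisymm (jTop_le t) ?_
  conv_lhs => rw [← generateFrom_setOf_isOpen t]
  rw [jTop_def (J := J) t]
  apply generateFrom_anti
  intro U hU
  have := closed_of_jclosed hX hU
  rw [← @isOpen_compl_iff X Uᶜ t] at this
  rwa [compl_compl] at this

lemma jconv_jTop (t : TopologicalSpace X) : @IsJConvergence J _ X (@jTop J _ X t) := by
  intro A hA
  have hnj : ¬ @JClosedSet J _ X t A := fun h => hA (isClosed_jTop_of_jclosed h)
  rw [JClosedSet] at hnj
  push_neg at hnj
  obtain ⟨I, hI, f, hf, hv, ht⟩ := hnj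
  exact ⟨I, hI, f, continuous_into_jTop hI hf, hv, ht⟩

end SecD

end Stmt8

namespace Stmt8

section SecE1

set_option linter.unusedSectionVars false

variable {J : Type v} [LinearOrder J] [WellFoundedLT J]

lemma lof_mono {L M : Set J} (hLM : ∀ j ∈ L, j ∈ M) (hM : AlmostClosed M) :
    lof L ≤ lof M := by
  apply (isLUB_lof L).2
  rintro z ⟨j, hj, rfl⟩
  exact le_of_lt (ac_lt_lof hM (hLM j hj))

lemma exists_gt_of_lt_lof {L : Set J} {b : WithTop J} (hb : b < lof L) :
    ∃ l ∈ L, b < (l : WithTop J) := by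
  by_contra hcon
  push_neg at hcon
  have : lof L ≤ b := (isLUB_lof L).2 (by rintro z ⟨l, hl, rfl⟩; exact hcon l hl)
  exact absurd hb (not_lt.2 this)

lemma nuM_cases {M L : Set J} (hM : AlmostClosed M) (hacL : AlmostClosed L)
    (hLM : ∀ j ∈ L, j ∈ M) :
    (lof L = lof M ∧ nuM hLM = ⊤) ∨
    (∃ x : J, ∃ hx : x ∈ M, IsLUB (img L) ↑x ∧ nuM hLM = WithTop.some ⟨x, hx⟩ ∧
      ∀ j ∈ L, j < x) := by
  rcases eq_or_lt_of_le (lof_mono hLM hM) with heq | hlt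
  · left
    refine ⟨heq, ?_⟩
    apply nuM_eq hLM (fun j hj => WithTop.coe_lt_top _)
    intro b hb
    obtain ⟨m, hm⟩ := WithTop.ne_top_iff_exists.1 (ne_top_of_lt hb)
    have hmx : (m.1 : WithTop J) < lof L := by rw [heq]; exact ac_lt_lof hM m.2
    obtain ⟨l, hl, hlgt⟩ := exists_gt_of_lt_lof hmx
    refine ⟨l, hl, ?_⟩
    rw [← hm]
    exact WithTop.coe_lt_coe.2 (Subtype.mk_lt_mk.2 (WithTop.coe_lt_coe.1 hlgt))
  · right
    have hln : lof L ≠ ⊤ := ne_top_of_lt (lt_of_lt_of_le hlt le_top)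
    obtain ⟨x, hx⟩ := WithTop.ne_top_iff_exists.1 hln
    have happM : Approa M ↑x := by
      rw [hx]
      obtain ⟨h1, h2⟩ := ac_approa hacL
      constructor
      · obtain ⟨j, hj, hjl⟩ := h1
        exact ⟨j, hLM j hj, hjl⟩
      · intro b hb
        obtain ⟨j, hj, hb1, hb2⟩ := h2 b hb
        exact ⟨j, hLM j hj, hb1, hb2⟩
    have hxlt : (↑x : WithTop J) < lof M := hx ▸ hlt
    obtain ⟨x', hx'M, hx'e⟩ := ac_limitclosed hM hxlt happM
    have hxx : x' = x := by exact_mod_cast hx'e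
    subst hxx
    have hjlt : ∀ j ∈ L, j < x' := by
      intro j hj
      have := ac_lt_lof hacL hj
      rw [← hx] at this
      exact WithTop.coe_lt_coe.1 this
    refine ⟨x', hx'M, hx ▸ isLUB_lof L, ?_, hjlt⟩
    apply nuM_eq hLM
    · intro j hj
      exact WithTop.coe_lt_coe.2 (Subtype.mk_lt_mk.2 (hjlt j hj))
    · intro b hb
      obtain ⟨m, hm⟩ := WithTop.ne_top_iff_exists.1 (ne_top_of_lt hb)
      have hmx : (m.1 : WithTop J) < lof L := by
        rw [← hx]
        have : m < (⟨x', hx'M⟩ : ↥M) := by rw [← WithTop.coe_lt_coe, hm]; exact hb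
        exact_mod_cast Subtype.coe_lt_coe.2 this
      obtain ⟨l, hl, hlgt⟩ := exists_gt_of_lt_lof hmx
      refine ⟨l, hl, ?_⟩
      rw [← hm]
      exact WithTop.coe_lt_coe.2 (Subtype.mk_lt_mk.2 (WithTop.coe_lt_coe.1 hlgt))

/-- extension of a map defined on `L` to `WithTop ↥L`, sending `⊤` to the least upper
bound of the values. -/
noncomputable def wext {L : Set J} {β : Type*} [LinearOrder β] [WellFoundedLT β]
    (w : ↥L → WithTop β) : WithTop ↥L → WithTop β :=
  fun z => WithTop.recTopCoe (lubW (Set.range w)) w z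

@[simp] lemma wext_coe {L : Set J} {β : Type*} [LinearOrder β] [WellFoundedLT β]
    (w : ↥L → WithTop β) (l : ↥L) : wext w (WithTop.some l) = w l := rfl
@[simp] lemma wext_top {L : Set J} {β : Type*} [LinearOrder β] [WellFoundedLT β]
    (w : ↥L → WithTop β) : wext w ⊤ = lubW (Set.range w) := rfl

lemma wext_continuous {L : Set J} {β : Type*} [LinearOrder β] [WellFoundedLT β]
    (hacL : AlmostClosed L) {w : ↥L → WithTop β}
    (hmono : ∀ l1 l2 : ↥L, l1 ≤ l2 → w l1 ≤ w l2)
    (hcont : ∀ l₀ : ↥L, Approa L ↑l₀.1 → IsLUB (w '' {l' | l' < l₀}) (w l₀)) :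
    Continuous (wext w) := by
  have hm : Monotone (wext w) := by
    intro a b hab
    induction b using WithTop.recTopCoe with
    | top =>
      induction a using WithTop.recTopCoe with
      | top => exact le_rfl
      | coe l => exact (isLUB_lubW _).1 ⟨l, rfl⟩
    | coe l2 =>
      induction a using WithTop.recTopCoe with
      | top => exact absurd hab (WithTop.not_top_le_coe _)
      | coe l1 => exact hmono l1 l2 (WithTop.coe_le_coe.1 hab)
  apply continuous_crit hm
  intro x hne hdense k hk
  induction x using WithTop.recTopCoe with
  | top =>
    rw [wext_top] at hk
    obtain ⟨z, ⟨l, rfl⟩, hzk⟩ : ∃ z ∈ Set.range w, k < z := by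
      by_contra hcon
      push_neg at hcon
      exact absurd hk (not_lt.2 ((isLUB_lubW _).2 hcon))
    refine ⟨WithTop.some l, WithTop.coe_lt_top _, ?_⟩
    intro z hz1 _
    induction z using WithTop.recTopCoe with
    | top => exact lt_of_lt_of_le hzk ((isLUB_lubW _).1 ⟨l, rfl⟩)
    | coe l3 =>
      rw [wext_coe]
      exact lt_of_lt_of_le hzk (hmono l l3 (le_of_lt (WithTop.coe_lt_coe.1 hz1)))
  | coe l₀ =>
    rw [wext_coe] at hk
    have happ := dense_approa hacL hne hdense
    rw [embL_coe] at happ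
    have hlub := hcont l₀ happ
    obtain ⟨z, ⟨l', hl', rfl⟩, hzk⟩ : ∃ z ∈ w '' {l' | l' < l₀}, k < z := by
      by_contra hcon
      push_neg at hcon
      exact absurd hk (not_lt.2 (hlub.2 hcon))
    refine ⟨WithTop.some l', WithTop.coe_lt_coe.2 hl', ?_⟩
    intro z hz1 hz2
    induction z using WithTop.recTopCoe with
    | top => exact absurd hz2 (by simp)
    | coe l3 =>
      rw [wext_coe]
      exact lt_of_lt_of_le hzk (hmono l' l3 (le_of_lt (WithTop.coe_lt_coe.1 hz1)))

def PairClosed (M K : Set J) (S : Set (WithTop ↥M × WithTop ↥K)) : Prop :=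
  ∀ P : Set J, AlmostClosed P → ∀ a : WithTop ↥P → WithTop ↥M,
    ∀ b : WithTop ↥P → WithTop ↥K, Continuous a → Continuous b →
    (∀ p : ↥P, (a (WithTop.some p), b (WithTop.some p)) ∈ S) → (a ⊤, b ⊤) ∈ S

lemma twoD_const {M K : Set J} (hM : AlmostClosed M) (hK : AlmostClosed K)
    {S : Set (WithTop ↥M × WithTop ↥K)} (hS : PairClosed M K S) (w : WithTop ↥K)
    (hcof : ∀ m : ↥M, ∃ m' : ↥M, m < m' ∧ (WithTop.some m', w) ∈ S) :
    ((⊤ : WithTop ↥M), w) ∈ S := by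
  by_contra hgoal
  set R := {j : J | ∃ m : ↥M, m.1 = j ∧ (WithTop.some m, w) ∈ S} with hRdef
  have hRM : ∀ j ∈ R, j ∈ M := by rintro j ⟨m, rfl, _⟩; exact m.2
  have hRS : ∀ j, ∀ hj : j ∈ R, (WithTop.some (⟨j, hRM j hj⟩ : ↥M), w) ∈ S := by
    rintro j ⟨m, rfl, hm⟩; exact hm
  have hstep : ∀ L : Set J, (∀ j ∈ L, j ∈ R) → AlmostClosed L → ∀ x : J,
      IsLUB (img L) ↑x → x ∈ R := by
    intro L hLR hacL x hlubx
    have hLM : ∀ j ∈ L, j ∈ M := fun j hj => hRM j (hLR j hj)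
    have hlofx : lof L = ↑x := (isLUB_lof L).unique hlubx
    have hvals : ∀ p : ↥L, (inclMap hLM (WithTop.some p), (fun _ : WithTop ↥L => w) (WithTop.some p)) ∈ S := by
      intro p
      rw [inclMap_coe]
      exact hRS p.1 (hLR p.1 p.2)
    have hmem := hS L hacL (inclMap hLM) (fun _ => w) (inclMap_continuous hacL hLM)
      continuous_const hvals
    rw [inclMap_top] at hmem
    rcases nuM_cases hM hacL hLM with ⟨_, hν⟩ | ⟨x', hx', hlub', hν, _⟩
    · rw [hν] at hmem
      exact absurd hmem hgoal
    · rw [hν] at hmem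
      have : x' = x := by
        have := (isLUB_lof L).unique hlub'
        rw [hlofx] at this
        exact_mod_cast this.symm
      subst this
      exact ⟨⟨x', hx'⟩, rfl, hmem⟩
  have hsub : ∀ j ∈ R, (j : WithTop J) < lof M := fun j hj => ac_lt_lof hM (hRM j hj)
  have happ : Approa R (lof M) := by
    constructor
    · obtain ⟨j, hj⟩ := ac_nonempty hM
      obtain ⟨m', hlt, hm'⟩ := hcof ⟨j, hj⟩
      exact ⟨m'.1, ⟨m', rfl, hm'⟩, ac_lt_lof hM m'.2⟩
    · intro b hb
      obtain ⟨j, hj, hb1, _⟩ := (ac_approa hM).2 b hb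
      obtain ⟨m', hlt, hm'⟩ := hcof ⟨j, hj⟩
      refine ⟨m'.1, ⟨m', rfl, hm'⟩, ?_, ac_lt_lof hM m'.2⟩
      exact lt_trans hb1 (by exact_mod_cast Subtype.coe_lt_coe.2 hlt)
  obtain ⟨hacR, hlofR⟩ := reach hsub happ hstep
  have hν : nuM hRM = ⊤ := by
    apply nuM_eq hRM (fun j hj => WithTop.coe_lt_top _)
    intro b hb
    obtain ⟨m, hm⟩ := WithTop.ne_top_iff_exists.1 (ne_top_of_lt hb)
    obtain ⟨m', hlt, hm'⟩ := hcof m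
    refine ⟨m'.1, ⟨m', rfl, hm'⟩, ?_⟩
    rw [← hm]
    exact WithTop.coe_lt_coe.2 (by exact_mod_cast hlt)
  have hmem := hS R hacR (inclMap hRM) (fun _ => w) (inclMap_continuous hacR hRM)
    continuous_const (fun p => by rw [inclMap_coe]; exact hRS p.1 p.2)
  rw [inclMap_top, hν] at hmem
  exact hgoal hmem

end SecE1

end Stmt8

namespace Stmt8

section SecE2

set_option linter.unusedSectionVars false
set_option maxHeartbeats 1000000

variable {J : Type v} [LinearOrder J] [WellFoundedLT J]

structure PP (M K : Set J) (S : Set (WithTop ↥M × WithTop ↥K)) (s : ↥M) : Type v where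
  L : Set J
  w : J → WithTop ↥K
  hne : L.Nonempty
  hLM : ∀ j ∈ L, j ∈ M
  hgt : ∀ j ∈ L, s.1 < j
  hSmem : ∀ j, ∀ hj : j ∈ L, (WithTop.some ⟨j, hLM j hj⟩, w j) ∈ S
  hmono : ∀ j1 ∈ L, ∀ j2 ∈ L, j1 ≤ j2 → w j1 ≤ w j2
  hlimcl : ∀ x : J, Approa L ↑x → (∃ l ∈ L, x < l) → x ∈ L
  hwcont : ∀ j, j ∈ L → Approa L ↑j → IsLUB (w '' {l ∈ L | l < j}) (w j)

variable {M K : Set J} {S : Set (WithTop ↥M × WithTop ↥K)} {s : ↥M}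

instance : Preorder (PP M K S s) where
  le := fun π1 π2 => π1.L ⊆ π2.L ∧ (∀ a ∈ π2.L, a ∉ π1.L → ∀ b ∈ π1.L, b < a) ∧
    ∀ j ∈ π1.L, π2.w j = π1.w j
  le_refl := fun π => ⟨subset_rfl, fun a ha hna => (hna ha).elim, fun _ _ => rfl⟩
  le_trans := by
    rintro π1 π2 π3 ⟨h1, h2, h3⟩ ⟨g1, g2, g3⟩
    refine ⟨h1.trans g1, ?_, ?_⟩
    · intro a ha hna b hb
      by_cases ha2 : a ∈ π2.L
      · exact h2 a ha2 hna b hb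
      · exact g2 a ha ha2 b (h1 hb)
    · intro j hj
      rw [g3 j (h1 hj), h3 j hj]

lemma PP.le_def {π1 π2 : PP M K S s} : π1 ≤ π2 ↔ π1.L ⊆ π2.L ∧
    (∀ a ∈ π2.L, a ∉ π1.L → ∀ b ∈ π1.L, b < a) ∧ ∀ j ∈ π1.L, π2.w j = π1.w j := Iff.rfl

lemma PP.init {π1 π2 : PP M K S s} (h : π1 ≤ π2) :
    ∀ a ∈ π2.L, ∀ b ∈ π1.L, a ≤ b → a ∈ π1.L := by
  intro a ha b hb hab
  by_contra hna
  exact absurd hab (not_le.2 (h.2.1 a ha hna b hb))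

lemma chain_bdd {c : Set (PP M K S s)} (hc : IsChain (· ≤ ·) c) (hcne : c.Nonempty) :
    ∃ ub, ∀ π ∈ c, π ≤ ub := by
  classical
  set LU := ⋃ π ∈ c, π.L with hLU
  set wU := fun j => if h : ∃ π ∈ c, j ∈ π.L then h.choose.w j else (⊤ : WithTop ↥K) with hwU
  have hmem : ∀ a, a ∈ LU ↔ ∃ π ∈ c, a ∈ π.L := by
    intro a
    simp only [hLU, Set.mem_iUnion, exists_prop]
  have hagree : ∀ π ∈ c, ∀ π' ∈ c, ∀ j ∈ π.L, j ∈ π'.L → π.w j = π'.w j := by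
    intro π hπ π' hπ' j hj hj'
    rcases eq_or_ne π π' with rfl | hne'
    · rfl
    rcases hc hπ hπ' hne' with h | h
    · exact (h.2.2 j hj).symm
    · exact h.2.2 j hj'
  have hwUe : ∀ π ∈ c, ∀ j ∈ π.L, wU j = π.w j := by
    intro π hπ j hj
    have hex : ∃ π' ∈ c, j ∈ π'.L := ⟨π, hπ, hj⟩
    rw [hwU]
    simp only [dif_pos hex]
    exact hagree _ hex.choose_spec.1 π hπ _ hex.choose_spec.2 hj
  have hloc : ∀ π ∈ c, ∀ a ∈ LU, a ∉ π.L → ∀ b ∈ π.L, b < a := by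
    intro π hπ a ha hna b hb
    obtain ⟨π2, hπ2, ha2⟩ := (hmem a).1 ha
    rcases eq_or_ne π π2 with rfl | hne'
    · exact absurd ha2 hna
    rcases hc hπ hπ2 hne' with h | h
    · exact h.2.1 a ha2 hna b hb
    · exact absurd (h.1 ha2) hna
  have hinit : ∀ π ∈ c, ∀ a ∈ LU, ∀ b ∈ π.L, a ≤ b → a ∈ π.L := by
    intro π hπ a ha b hb hab
    by_contra hna
    exact absurd hab (not_le.2 (hloc π hπ a ha hna b hb))
  obtain ⟨π₀, hπ₀⟩ := hcne
  have hLM : ∀ j ∈ LU, j ∈ M := by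
    intro j hj
    obtain ⟨π2, hπ2, hj2⟩ := (hmem j).1 hj
    exact π2.hLM j hj2
  refine ⟨⟨LU, wU, ?_, hLM, ?_, ?_, ?_, ?_, ?_⟩, ?_⟩
  · obtain ⟨j, hj⟩ := π₀.hne
    exact ⟨j, Set.mem_biUnion hπ₀ hj⟩
  · intro j hj
    obtain ⟨π2, hπ2, hj2⟩ := (hmem j).1 hj
    exact π2.hgt j hj2
  · intro j hj
    obtain ⟨π2, hπ2, hj2⟩ := (hmem j).1 hj
    rw [hwUe π2 hπ2 j hj2]
    exact π2.hSmem j hj2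
  · intro j1 hj1 j2 hj2 hle
    obtain ⟨πa, hπa, hj1a⟩ := (hmem j1).1 hj1
    obtain ⟨πb, hπb, hj2b⟩ := (hmem j2).1 hj2
    have hor : j1 ∈ πb.L ∨ j2 ∈ πa.L := by
      rcases eq_or_ne πa πb with rfl | hne'
      · exact Or.inl hj1a
      rcases hc hπa hπb hne' with h | h
      · exact Or.inl (h.1 hj1a)
      · exact Or.inr (h.1 hj2b)
    rcases hor with h1 | h2
    · rw [hwUe πb hπb j1 h1, hwUe πb hπb j2 hj2b]
      exact πb.hmono j1 h1 j2 hj2b hle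
    · rw [hwUe πa hπa j1 hj1a, hwUe πa hπa j2 h2]
      exact πa.hmono j1 hj1a j2 h2 hle
  · intro x hax hex
    obtain ⟨l, hl, hxl⟩ := hex
    obtain ⟨π2, hπ2, hl2⟩ := (hmem l).1 hl
    have happ2 : Approa π2.L ↑x := by
      constructor
      · obtain ⟨j, hj, hjx⟩ := hax.1
        refine ⟨j, hinit π2 hπ2 j hj l hl2 ?_, hjx⟩
        exact le_of_lt (lt_trans (WithTop.coe_lt_coe.1 hjx) hxl)
      · intro b hb
        obtain ⟨j, hj, h1, h2⟩ := hax.2 b hb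
        refine ⟨j, hinit π2 hπ2 j hj l hl2 ?_, h1, h2⟩
        exact le_of_lt (lt_trans (WithTop.coe_lt_coe.1 h2) hxl)
    exact Set.mem_biUnion hπ2 (π2.hlimcl x happ2 ⟨l, hl2, hxl⟩)
  · intro j hj hax
    obtain ⟨π2, hπ2, hj2⟩ := (hmem j).1 hj
    have happ2 : Approa π2.L ↑j := by
      constructor
      · obtain ⟨j', hj', hjx⟩ := hax.1
        exact ⟨j', hinit π2 hπ2 j' hj' j hj2 (le_of_lt (WithTop.coe_lt_coe.1 hjx)), hjx⟩
      · intro b hb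
        obtain ⟨j', hj', h1, h2⟩ := hax.2 b hb
        exact ⟨j', hinit π2 hπ2 j' hj' j hj2 (le_of_lt (WithTop.coe_lt_coe.1 h2)), h1, h2⟩
    have hset : {l ∈ LU | l < j} = {l ∈ π2.L | l < j} := by
      ext a
      constructor
      · rintro ⟨ha, hlt⟩
        exact ⟨hinit π2 hπ2 a ha j hj2 (le_of_lt hlt), hlt⟩
      · rintro ⟨ha, hlt⟩
        exact ⟨Set.mem_biUnion hπ2 ha, hlt⟩
    rw [hset, hwUe π2 hπ2 j hj2, Set.image_congr (fun a (ha : a ∈ {l ∈ π2.L | l < j}) =>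
      hwUe π2 hπ2 a ha.1)]
    exact π2.hwcont j hj2 happ2
  · intro π hπ
    exact ⟨fun j hj => Set.mem_biUnion hπ hj, hloc π hπ, fun j hj => hwUe π hπ j hj⟩

end SecE2

end Stmt8

namespace Stmt8

section SecE3

set_option linter.unusedSectionVars false
set_option maxHeartbeats 1600000

variable {J : Type v} [LinearOrder J] [WellFoundedLT J]
variable {M K : Set J} {S : Set (WithTop ↥M × WithTop ↥K)}

lemma twoD_aux (hM : AlmostClosed M) (hK : AlmostClosed K) (hS : PairClosed M K S)
    (hgoal : ¬ ∃ w, ((⊤ : WithTop ↥M), w) ∈ S) :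
    ∀ ρ : WithTop ↥K, ∀ s : ↥M,
      (∀ m : ↥M, s < m →
        ((∃ w, (WithTop.some m, w) ∈ S) ∧ ∀ w, (WithTop.some m, w) ∈ S → w < ρ)) → False := by
  intro ρ
  induction ρ using WellFoundedLT.induction with
  | ind ρ IH =>
    intro s hyp
    by_cases hshrink : ∃ ρ' < ρ, ∃ s' : ↥M, ∀ m : ↥M, s' < m →
        ∀ w, (WithTop.some m, w) ∈ S → w < ρ'
    · obtain ⟨ρ', hρ', s', hs'⟩ := hshrink
      rcases le_total s s' with h | h
      · exact IH ρ' hρ' s' (fun m hm => ⟨(hyp m (lt_of_le_of_lt h hm)).1, hs' m hm⟩)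
      · exact IH ρ' hρ' s (fun m hm => ⟨(hyp m hm).1, hs' m (lt_of_le_of_lt h hm)⟩)
    · push_neg at hshrink
      have hvit : ∀ ρ' < ρ, ∀ s' : ↥M, ∃ m : ↥M, (s < m ∧ s' < m) ∧
          ∃ w, (WithTop.some m, w) ∈ S ∧ ρ' ≤ w ∧ w < ρ := by
        intro ρ' hρ' s'
        rcases le_total s s' with h | h
        · obtain ⟨m, hm, w, hw, hwge⟩ := hshrink ρ' hρ' s'
          exact ⟨m, ⟨lt_of_le_of_lt h hm, hm⟩, w, hw, hwge,
            (hyp m (lt_of_le_of_lt h hm)).2 w hw⟩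
        · obtain ⟨m, hm, w, hw, hwge⟩ := hshrink ρ' hρ' s
          exact ⟨m, ⟨hm, lt_of_le_of_lt h hm⟩, w, hw, hwge, (hyp m hm).2 w hw⟩
      classical
      obtain ⟨m₀j, hm₀M, hm₀gt⟩ := ac_nomax hM s.2
      obtain ⟨w₀, hw₀⟩ := (hyp ⟨m₀j, hm₀M⟩ hm₀gt).1
      have seed : PP M K S s := by
        refine ⟨{m₀j}, fun _ => w₀, ⟨m₀j, rfl⟩, ?_, ?_, ?_, ?_, ?_, ?_⟩
        · rintro j rfl; exact hm₀M
        · rintro j rfl; exact hm₀gt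
        · intro j hj
          rcases hj with rfl
          exact hw₀
        · intro j1 _ j2 _ _; exact le_rfl
        · intro x hax hex
          exfalso
          obtain ⟨l, hl, hxl⟩ := hex
          rcases hl with rfl
          obtain ⟨j, hj, hjx⟩ := hax.1
          rcases hj with rfl
          exact absurd (WithTop.coe_lt_coe.1 hjx) (not_lt.2 (le_of_lt hxl))
        · intro j hj hax
          exfalso
          rcases hj with rfl
          obtain ⟨j', hj', hjx⟩ := hax.1
          rcases hj' with rfl
          exact absurd (WithTop.coe_lt_coe.1 hjx) (lt_irrefl _)
      obtain ⟨πm, hmax⟩ := zorn_le (α := PP M K S s) (by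
        intro c hc
        rcases c.eq_empty_or_nonempty with rfl | hcne
        · exact ⟨seed, by simp [upperBounds]⟩
        · obtain ⟨ub, hub⟩ := chain_bdd hc hcne
          exact ⟨ub, hub⟩)
      set Λ := πm.L with hΛdef
      have hwlt : ∀ j, ∀ hj : j ∈ Λ, πm.w j < ρ := fun j hj =>
        (hyp ⟨j, πm.hLM j hj⟩ (πm.hgt j hj)).2 _ (πm.hSmem j hj)
      by_cases hmaxel : ∃ lst ∈ Λ, ∀ l ∈ Λ, l ≤ lst
      · -- successor extension contradicts maximality
        obtain ⟨lst, hlst, hub⟩ := hmaxel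
        obtain ⟨m, ⟨hms, hmlst⟩, w', hw'S, hw'ge, hw'lt⟩ :=
          hvit (πm.w lst) (hwlt lst hlst) ⟨lst, πm.hLM lst hlst⟩
        have hmlst' : lst < m.1 := hmlst
        have hmnew : m.1 ∉ Λ := fun h => absurd (hub m.1 h) (not_le.2 hmlst')
        have hΛlt : ∀ j ∈ Λ, j < m.1 := fun j hj => lt_of_le_of_lt (hub j hj) hmlst'
        set w2 := Function.update πm.w m.1 w' with hw2def
        have hw2Λ : ∀ j ∈ Λ, w2 j = πm.w j := fun j hj =>
          Function.update_of_ne (ne_of_lt (hΛlt j hj)) _ _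
        have hw2m : w2 m.1 = w' := Function.update_self _ _ _
        have hf_LM : ∀ j ∈ Λ ∪ {m.1}, j ∈ M := by
          rintro j (hj | rfl)
          · exact πm.hLM j hj
          · exact m.2
        have hf_gt : ∀ j ∈ Λ ∪ {m.1}, s.1 < j := by
          rintro j (hj | rfl)
          · exact πm.hgt j hj
          · exact hms
        have hf_S : ∀ j, ∀ hj : j ∈ Λ ∪ {m.1}, (WithTop.some ⟨j, hf_LM j hj⟩, w2 j) ∈ S := by
          rintro j (hj | rfl)
          · rw [hw2Λ j hj]; exact πm.hSmem j hj
          · rw [hw2m]; exact hw'S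
        have hf_mono : ∀ j1 ∈ Λ ∪ {m.1}, ∀ j2 ∈ Λ ∪ {m.1}, j1 ≤ j2 → w2 j1 ≤ w2 j2 := by
          rintro j1 (hj1 | rfl) j2 (hj2 | rfl) hle
          · rw [hw2Λ j1 hj1, hw2Λ j2 hj2]; exact πm.hmono j1 hj1 j2 hj2 hle
          · rw [hw2Λ j1 hj1, hw2m]
            exact le_trans (πm.hmono j1 hj1 lst hlst (hub j1 hj1)) hw'ge
          · exact absurd hle (not_le.2 (hΛlt j2 hj2))
          · exact le_rfl
        have hf_limcl : ∀ x : J, Approa (Λ ∪ {m.1}) ↑x → (∃ l ∈ Λ ∪ {m.1}, x < l) →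
            x ∈ Λ ∪ {m.1} := by
          intro x hax _
          rcases lt_trichotomy x m.1 with hxm | heq | hmx
          · have haxΛ : Approa Λ ↑x := by
              constructor
              · obtain ⟨j, hj, hjx⟩ := hax.1
                rcases hj with hj | rfl
                · exact ⟨j, hj, hjx⟩
                · exact absurd (WithTop.coe_lt_coe.1 hjx) (not_lt.2 (le_of_lt hxm))
              · intro b hb
                obtain ⟨j, hj, h1, h2⟩ := hax.2 b hb
                rcases hj with hj | rfl
                · exact ⟨j, hj, h1, h2⟩
                · exact absurd (lt_trans h2 (WithTop.coe_lt_coe.2 hxm)) (lt_irrefl _)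
            rcases lt_trichotomy x lst with hxlst | rfl | hlstx
            · exact Or.inl (πm.hlimcl x haxΛ ⟨lst, hlst, hxlst⟩)
            · exact Or.inl hlst
            · exfalso
              obtain ⟨j, hj, h1, h2⟩ := hax.2 ↑lst (WithTop.coe_lt_coe.2 hlstx)
              rcases hj with hj | rfl
              · exact absurd (WithTop.coe_lt_coe.1 h1) (not_lt.2 (hub j hj))
              · exact absurd (WithTop.coe_lt_coe.1 h2) (not_lt.2 (le_of_lt hxm))
          · exact Or.inr heq
          · exfalso
            obtain ⟨j, hj, h1, h2⟩ := hax.2 ↑m.1 (WithTop.coe_lt_coe.2 hmx)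
            rcases hj with hj | rfl
            · exact absurd (lt_trans (WithTop.coe_lt_coe.2 (hΛlt j hj)) h1) (lt_irrefl _)
            · exact absurd h1 (lt_irrefl _)
        have hf_wcont : ∀ j, j ∈ Λ ∪ {m.1} → Approa (Λ ∪ {m.1}) ↑j →
            IsLUB (w2 '' {l ∈ Λ ∪ {m.1} | l < j}) (w2 j) := by
          intro j hjmem hax
          rcases hjmem with hj | hjeq
          · have hjm : j < m.1 := hΛlt j hj
            have haxΛ : Approa Λ ↑j := by
              constructor
              · obtain ⟨j', hj', hjx⟩ := hax.1
                rcases hj' with hj' | rfl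
                · exact ⟨j', hj', hjx⟩
                · exact absurd (lt_trans (WithTop.coe_lt_coe.1 hjx) hjm) (lt_irrefl _)
              · intro b hb
                obtain ⟨j', hj', h1, h2⟩ := hax.2 b hb
                rcases hj' with hj' | rfl
                · exact ⟨j', hj', h1, h2⟩
                · exact absurd (lt_trans (WithTop.coe_lt_coe.1 h2) hjm) (lt_irrefl _)
            have hset : {l ∈ Λ ∪ {m.1} | l < j} = {l ∈ Λ | l < j} := by
              ext a
              constructor
              · rintro ⟨ha | rfl, hlt⟩
                · exact ⟨ha, hlt⟩
                · exact absurd (lt_trans hlt hjm) (lt_irrefl _)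
              · rintro ⟨ha, hlt⟩
                exact ⟨Or.inl ha, hlt⟩
            rw [hset, hw2Λ j hj, Set.image_congr (fun a (ha : a ∈ {l ∈ Λ | l < j}) =>
              hw2Λ a ha.1)]
            exact πm.hwcont j hj haxΛ
          · exfalso
            have hjeq' : j = m.1 := hjeq
            obtain ⟨j', hj', h1, h2⟩ := hax.2 ↑lst (by
              rw [hjeq']; exact WithTop.coe_lt_coe.2 hmlst')
            rcases hj' with hj' | hj'eq
            · exact absurd (WithTop.coe_lt_coe.1 h1) (not_lt.2 (hub j' hj'))
            · have : j' = m.1 := hj'eq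
              rw [this, hjeq'] at h2
              exact absurd h2 (lt_irrefl _)
        have hπ' : πm ≤ (⟨Λ ∪ {m.1}, w2, ⟨m.1, Or.inr rfl⟩, hf_LM, hf_gt, hf_S, hf_mono,
            hf_limcl, hf_wcont⟩ : PP M K S s) := by
          refine ⟨Set.subset_union_left, ?_, fun j hj => hw2Λ j hj⟩
          rintro a (ha | rfl) hna b hb
          · exact absurd ha hna
          · exact hΛlt b hb
        exact hmnew ((hmax hπ').1 (Or.inr rfl))
      · -- no max: limit extension or done
        push_neg at hmaxel
        have hnomax : ∀ j ∈ Λ, ∃ j' ∈ Λ, j < j' := by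
          intro j hj
          obtain ⟨j', hj', h⟩ := hmaxel j hj
          exact ⟨j', hj', h⟩
        have hacΛ : AlmostClosed Λ := by
          apply ac_build πm.hne hnomax
          intro y hy hay
          induction y using WithTop.recTopCoe with
          | top => exact absurd (lt_of_lt_of_le hy le_top) (lt_irrefl _)
          | coe y' =>
            refine ⟨y', πm.hlimcl y' hay ?_, rfl⟩
            obtain ⟨l, hl, hgt'⟩ := exists_gt_of_lt_lof hy
            exact ⟨l, hl, WithTop.coe_lt_coe.1 hgt'⟩
        set wsub : ↥Λ → WithTop ↥K := fun l => πm.w l.1 with hwsubdef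
        have hbcont : Continuous (wext wsub) := by
          apply wext_continuous hacΛ
          · exact fun l1 l2 h => πm.hmono l1.1 l1.2 l2.1 l2.2 h
          · intro l₀ hax
            have h := πm.hwcont l₀.1 l₀.2 hax
            have hset : wsub '' {l' : ↥Λ | l' < l₀} = πm.w '' {l ∈ Λ | l < l₀.1} := by
              ext z
              constructor
              · rintro ⟨l', hlt, rfl⟩
                exact ⟨l'.1, ⟨l'.2, hlt⟩, rfl⟩
              · rintro ⟨a, ⟨haΛ, hlt⟩, rfl⟩
                exact ⟨⟨a, haΛ⟩, hlt, rfl⟩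
            rw [hset]
            exact h
        have hLMΛ : ∀ j ∈ Λ, j ∈ M := πm.hLM
        have hmem := hS Λ hacΛ (inclMap hLMΛ) (wext wsub) (inclMap_continuous hacΛ hLMΛ)
          hbcont (fun p => by rw [inclMap_coe, wext_coe]; exact πm.hSmem p.1 p.2)
        rw [inclMap_top, wext_top] at hmem
        rcases nuM_cases hM hacΛ hLMΛ with ⟨_, hν⟩ | ⟨x, hx, hlubx, hν, hjx⟩
        · rw [hν] at hmem
          exact hgoal ⟨_, hmem⟩
        · rw [hν] at hmem
          set ρhat := lubW (Set.range wsub) with hρhatdef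
          have hsx : s < (⟨x, hx⟩ : ↥M) := by
            obtain ⟨j, hj⟩ := πm.hne
            exact lt_trans (show s < (⟨j, πm.hLM j hj⟩ : ↥M) from πm.hgt j hj)
              (show (⟨j, πm.hLM j hj⟩ : ↥M) < ⟨x, hx⟩ from hjx j hj)
          have hρhat : ρhat < ρ := (hyp ⟨x, hx⟩ hsx).2 _ hmem
          have hxΛ : x ∉ Λ := fun h => absurd (hjx x h) (lt_irrefl x)
          have hgtlub : ∀ b : WithTop J, b < ↑x → ∃ l ∈ Λ, b < (l : WithTop J) := by
            intro b hb
            by_contra hcon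
            push_neg at hcon
            have : (↑x : WithTop J) ≤ b := hlubx.2 (by rintro z ⟨l, hl, rfl⟩; exact hcon l hl)
            exact absurd hb (not_lt.2 this)
          set w2 := Function.update πm.w x ρhat with hw2def
          have hw2Λ : ∀ j ∈ Λ, w2 j = πm.w j := fun j hj =>
            Function.update_of_ne (ne_of_lt (hjx j hj)) _ _
          have hw2x : w2 x = ρhat := Function.update_self _ _ _
          have hwle : ∀ j ∈ Λ, πm.w j ≤ ρhat := by
            intro j hj
            exact (isLUB_lubW _).1 ⟨⟨j, hj⟩, rfl⟩
          have hf_LM : ∀ j ∈ Λ ∪ {x}, j ∈ M := by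
            rintro j (hj | rfl)
            · exact πm.hLM j hj
            · exact hx
          have hf_gt : ∀ j ∈ Λ ∪ {x}, s.1 < j := by
            rintro j (hj | rfl)
            · exact πm.hgt j hj
            · exact hsx
          have hf_S : ∀ j, ∀ hj : j ∈ Λ ∪ {x}, (WithTop.some ⟨j, hf_LM j hj⟩, w2 j) ∈ S := by
            rintro j (hj | rfl)
            · rw [hw2Λ j hj]; exact πm.hSmem j hj
            · rw [hw2x]; exact hmem
          have hf_mono : ∀ j1 ∈ Λ ∪ {x}, ∀ j2 ∈ Λ ∪ {x}, j1 ≤ j2 → w2 j1 ≤ w2 j2 := by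
            rintro j1 (hj1 | rfl) j2 (hj2 | rfl) hle
            · rw [hw2Λ j1 hj1, hw2Λ j2 hj2]; exact πm.hmono j1 hj1 j2 hj2 hle
            · rw [hw2Λ j1 hj1, hw2x]; exact hwle j1 hj1
            · exact absurd hle (not_le.2 (hjx j2 hj2))
            · exact le_rfl
          have hf_limcl : ∀ x'' : J, Approa (Λ ∪ {x}) ↑x'' → (∃ l ∈ Λ ∪ {x}, x'' < l) →
              x'' ∈ Λ ∪ {x} := by
            intro x'' hax _
            rcases lt_trichotomy x'' x with hxm | heq | hmx
            · have haxΛ : Approa Λ ↑x'' := by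
                constructor
                · obtain ⟨j, hj, hjx'⟩ := hax.1
                  rcases hj with hj | rfl
                  · exact ⟨j, hj, hjx'⟩
                  · exact absurd (WithTop.coe_lt_coe.1 hjx') (not_lt.2 (le_of_lt hxm))
                · intro b hb
                  obtain ⟨j, hj, h1, h2⟩ := hax.2 b hb
                  rcases hj with hj | rfl
                  · exact ⟨j, hj, h1, h2⟩
                  · exact absurd (lt_trans h2 (WithTop.coe_lt_coe.2 hxm)) (lt_irrefl _)
              obtain ⟨l, hl, hgt'⟩ := hgtlub ↑x'' (WithTop.coe_lt_coe.2 hxm)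
              exact Or.inl (πm.hlimcl x'' haxΛ ⟨l, hl, WithTop.coe_lt_coe.1 hgt'⟩)
            · exact Or.inr heq
            · exfalso
              obtain ⟨j, hj, h1, h2⟩ := hax.2 ↑x (WithTop.coe_lt_coe.2 hmx)
              rcases hj with hj | rfl
              · exact absurd (lt_trans (WithTop.coe_lt_coe.2 (hjx j hj)) h1) (lt_irrefl _)
              · exact absurd h1 (lt_irrefl _)
          have hf_wcont : ∀ j, j ∈ Λ ∪ {x} → Approa (Λ ∪ {x}) ↑j →
              IsLUB (w2 '' {l ∈ Λ ∪ {x} | l < j}) (w2 j) := by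
            intro j hjmem hax
            rcases hjmem with hj | hjeq
            · have hjm : j < x := hjx j hj
              have haxΛ : Approa Λ ↑j := by
                constructor
                · obtain ⟨j', hj', hjx'⟩ := hax.1
                  rcases hj' with hj' | rfl
                  · exact ⟨j', hj', hjx'⟩
                  · exact absurd (lt_trans (WithTop.coe_lt_coe.1 hjx') hjm) (lt_irrefl _)
                · intro b hb
                  obtain ⟨j', hj', h1, h2⟩ := hax.2 b hb
                  rcases hj' with hj' | rfl
                  · exact ⟨j', hj', h1, h2⟩
                  · exact absurd (lt_trans (WithTop.coe_lt_coe.1 h2) hjm) (lt_irrefl _)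
              have hset : {l ∈ Λ ∪ {x} | l < j} = {l ∈ Λ | l < j} := by
                ext a
                constructor
                · rintro ⟨ha | rfl, hlt⟩
                  · exact ⟨ha, hlt⟩
                  · exact absurd (lt_trans hlt hjm) (lt_irrefl _)
                · rintro ⟨ha, hlt⟩
                  exact ⟨Or.inl ha, hlt⟩
              rw [hset, hw2Λ j hj, Set.image_congr (fun a (ha : a ∈ {l ∈ Λ | l < j}) =>
                hw2Λ a ha.1)]
              exact πm.hwcont j hj haxΛ
            · have hjeq' : j = x := hjeq
              rw [hjeq']
              have hset : {l ∈ Λ ∪ {x} | l < x} = Λ := by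
                ext a
                constructor
                · rintro ⟨ha | rfl, hlt⟩
                  · exact ha
                  · exact absurd hlt (lt_irrefl _)
                · intro ha
                  exact ⟨Or.inl ha, hjx a ha⟩
              have himg : w2 '' Λ = Set.range wsub := by
                ext z
                constructor
                · rintro ⟨a, haΛ, rfl⟩
                  exact ⟨⟨a, haΛ⟩, (hw2Λ a haΛ).symm⟩
                · rintro ⟨⟨a, haΛ⟩, rfl⟩
                  exact ⟨a, haΛ, hw2Λ a haΛ⟩
              rw [hset, himg, hw2x]
              exact isLUB_lubW _
          have hπ' : πm ≤ (⟨Λ ∪ {x}, w2, ⟨x, Or.inr rfl⟩, hf_LM, hf_gt, hf_S, hf_mono,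
              hf_limcl, hf_wcont⟩ : PP M K S s) := by
            refine ⟨Set.subset_union_left, ?_, fun j hj => hw2Λ j hj⟩
            rintro a (ha | rfl) hna b hb
            · exact absurd ha hna
            · exact hjx b hb
          exact hxΛ ((hmax hπ').1 (Or.inr rfl))

lemma twoD (hM : AlmostClosed M) (hK : AlmostClosed K) (hS : PairClosed M K S)
    (hrows : ∀ m : ↥M, ∃ w, (WithTop.some m, w) ∈ S) :
    ∃ w, ((⊤ : WithTop ↥M), w) ∈ S := by
  by_contra hgoal
  have hbdd : ∃ s₀ : ↥M, ∀ m : ↥M, s₀ < m → (WithTop.some m, (⊤ : WithTop ↥K)) ∉ S := by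
    by_contra h
    push_neg at h
    refine hgoal ⟨⊤, twoD_const hM hK hS ⊤ ?_⟩
    intro m
    obtain ⟨m', h1, h2⟩ := h m
    exact ⟨m', h1, h2⟩
  obtain ⟨s₀, hs₀⟩ := hbdd
  exact twoD_aux hM hK hS hgoal ⊤ s₀ (fun m hm => ⟨hrows m,
    fun w hw => lt_of_le_of_ne le_top (fun he => hs₀ m hm (he ▸ hw))⟩)

end SecE3

end Stmt8

namespace Stmt8

section SecF

set_option linter.unusedSectionVars false
set_option maxHeartbeats 1000000

variable {J : Type v} [LinearOrder J] [WellFoundedLT J]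

lemma chunk {L : Set J} (hL : AlmostClosed L) {z₀ : WithTop ↥L}
    (hne : ∃ b, b < z₀) (hdense : ∀ b < z₀, ∃ y, b < y ∧ y < z₀)
    {x₀ : WithTop ↥L} (hx₀ : x₀ < z₀) :
    ∃ (Lch : Set J) (hsub : ∀ j ∈ Lch, j ∈ L), AlmostClosed Lch ∧
      nuM hsub = z₀ ∧
      (∀ j, ∀ hj : j ∈ Lch, x₀ < WithTop.some ⟨j, hsub j hj⟩ ∧
        WithTop.some ⟨j, hsub j hj⟩ < z₀) ∧
      (∀ y : WithTop ↥L, x₀ < y → y < z₀ →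
        ∃ j, ∃ hj : j ∈ Lch, WithTop.some (⟨j, hsub j hj⟩ : ↥L) = y) := by
  classical
  set Lch := {j : J | ∃ hj : j ∈ L, x₀ < WithTop.some (⟨j, hj⟩ : ↥L) ∧
    WithTop.some (⟨j, hj⟩ : ↥L) < z₀} with hLch
  have hsub : ∀ j ∈ Lch, j ∈ L := by rintro j ⟨hj, _, _⟩; exact hj
  have hbounds : ∀ j, ∀ hj : j ∈ Lch, x₀ < WithTop.some (⟨j, hsub j hj⟩ : ↥L) ∧
      WithTop.some (⟨j, hsub j hj⟩ : ↥L) < z₀ := by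
    rintro j ⟨hj, h1, h2⟩; exact ⟨h1, h2⟩
  have hcov : ∀ y : WithTop ↥L, x₀ < y → y < z₀ →
      ∃ j, ∃ hj : j ∈ Lch, WithTop.some (⟨j, hsub j hj⟩ : ↥L) = y := by
    intro y h1 h2
    obtain ⟨l, hl⟩ := WithTop.ne_top_iff_exists.1 (ne_top_of_lt h2)
    refine ⟨l.1, ⟨l.2, ?_, ?_⟩, ?_⟩
    · show x₀ < WithTop.some _
      have h3 : WithTop.some (⟨l.1, l.2⟩ : ↥L) = y := hl
      rw [h3]; exact h1
    · show WithTop.some _ < z₀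
      have h3 : WithTop.some (⟨l.1, l.2⟩ : ↥L) = y := hl
      rw [h3]; exact h2
    · exact hl
  have hnemp : Lch.Nonempty := by
    obtain ⟨y, hy1, hy2⟩ := hdense x₀ hx₀
    obtain ⟨j, hj, _⟩ := hcov y hy1 hy2
    exact ⟨j, hj⟩
  have hnomax : ∀ j ∈ Lch, ∃ j' ∈ Lch, j < j' := by
    intro j hj
    obtain ⟨h1, h2⟩ := hbounds j hj
    obtain ⟨y, hy1, hy2⟩ := hdense _ h2
    obtain ⟨j', hj', hje⟩ := hcov y (lt_trans h1 hy1) hy2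
    refine ⟨j', hj', ?_⟩
    have : WithTop.some (⟨j, hsub j hj⟩ : ↥L) < WithTop.some (⟨j', hsub j' hj'⟩ : ↥L) := by
      rw [hje]; exact hy1
    exact Subtype.mk_lt_mk.1 (WithTop.coe_lt_coe.1 this)
  have hemb : ∀ j, ∀ hj : j ∈ Lch, (j : WithTop J) < embL L z₀ := by
    intro j hj
    have := (embL_lt_iff hL).2 (hbounds j hj).2
    rwa [embL_coe] at this
  have hlofle : lof Lch ≤ embL L z₀ := by
    apply (isLUB_lof Lch).2
    rintro z ⟨j, hj, rfl⟩
    exact le_of_lt (hemb j hj)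
  have hembz : embL L z₀ ≤ lof L := by
    induction z₀ using WithTop.recTopCoe with
    | top => rw [embL_top]
    | coe l => rw [embL_coe]; exact le_of_lt (ac_lt_lof hL l.2)
  have hacCh : AlmostClosed Lch := by
    apply ac_build hnemp hnomax
    intro y hy hay
    have hyL : y < lof L := lt_of_lt_of_le hy (le_trans hlofle hembz)
    have hayL : Approa L y := by
      constructor
      · obtain ⟨j, hj, h⟩ := hay.1
        exact ⟨j, hsub j hj, h⟩
      · intro b hb
        obtain ⟨j, hj, h1, h2⟩ := hay.2 b hb
        exact ⟨j, hsub j hj, h1, h2⟩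
    obtain ⟨j, hjL, hje⟩ := ac_limitclosed hL hyL hayL
    refine ⟨j, ⟨hjL, ?_, ?_⟩, hje⟩
    · -- x₀ < some ⟨j, hjL⟩
      obtain ⟨j', hj', hj'y⟩ := hay.1
      have h1 : x₀ < WithTop.some (⟨j', hsub j' hj'⟩ : ↥L) := (hbounds j' hj').1
      have hj'j : j' < j := by
        have h5 : (j' : WithTop J) < (j : WithTop J) := by rw [hje]; exact hj'y
        exact_mod_cast h5
      exact lt_trans h1 (WithTop.coe_lt_coe.2 (Subtype.mk_lt_mk.2 hj'j))
    · -- some ⟨j, hjL⟩ < z₀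
      obtain ⟨j'', hj'', hgt⟩ := exists_gt_of_lt_lof (show (j : WithTop J) < lof Lch from hje ▸ hy)
      have h2 : WithTop.some (⟨j, hjL⟩ : ↥L) < WithTop.some (⟨j'', hsub j'' hj''⟩ : ↥L) :=
        WithTop.coe_lt_coe.2 (Subtype.mk_lt_mk.2 (by exact_mod_cast hgt))
      exact lt_trans h2 (hbounds j'' hj'').2
  have hν : nuM hsub = z₀ := by
    apply nuM_eq hsub
    · exact fun j hj => (hbounds j hj).2
    · intro b hb
      rcases le_or_gt b x₀ with h | h
      · obtain ⟨j, hj⟩ := hnemp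
        exact ⟨j, hj, lt_of_le_of_lt h (hbounds j hj).1⟩
      · obtain ⟨y, hy1, hy2⟩ := hdense b hb
        obtain ⟨j, hj, hje⟩ := hcov y (lt_trans h hy1) hy2
        exact ⟨j, hj, by rw [hje]; exact hy1⟩
  exact ⟨Lch, hsub, hacCh, hν, hbounds, hcov⟩

lemma ev_lemma {E : Type*} {Z' : Type*} (τE : TopologicalSpace E) (τZ : TopologicalSpace Z')
    {Φ : Type*} (σ : TopologicalSpace Φ) (app : Φ → E → Z')
    (happ : ∀ φ, Continuous[τE, τZ] (app φ))
    (hW : ∀ Kt : Set J, AlmostClosed Kt → ∀ t : WithTop ↥Kt → E, Continuous[_, τE] t →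
      ∀ U : Set Z', IsOpen[τZ] U → IsOpen[σ] {φ | ∀ z, app φ (t z) ∈ U})
    {P : Set J} (hP : AlmostClosed P) {c : WithTop ↥P → Φ} (hc : Continuous[_, σ] c)
    {e : WithTop ↥P → E} (he : Continuous[_, τE] e) :
    Continuous[_, τZ] (fun p => app (c p) (e p)) := by
  rw [continuous_iff_continuousAt]
  intro p₀
  rw [ContinuousAt, Filter.tendsto_def]
  intro s hs
  obtain ⟨U, hUs, hU, hpU⟩ := mem_nhds_iff.1 hs
  rcases isolated_or_dense p₀ with hiso | ⟨hne, hdense⟩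
  · refine Filter.mem_of_superset (hiso.mem_nhds rfl) ?_
    rintro z rfl
    exact hUs hpU
  · have hG : IsOpen ((fun p => app (c p₀) (e p)) ⁻¹' U) :=
      @IsOpen.preimage _ _ _ τZ (fun p => app (c p₀) (e p)) ((happ (c p₀)).comp he) U hU
    have hp₀G : p₀ ∈ (fun p => app (c p₀) (e p)) ⁻¹' U := hpU
    obtain ⟨x₀, hx₀, hsub₀⟩ : ∃ x₀ < p₀, Ioc x₀ p₀ ⊆ (fun p => app (c p₀) (e p)) ⁻¹' U := by
      rcases nhds_shrink hG hp₀G with h | ⟨_, hno⟩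
      · exact h
      · exact absurd hne hno
    obtain ⟨Lch, hsubCh, hacCh, hνCh, hbounds, hcov⟩ := chunk hP hne hdense hx₀
    have htcont : Continuous[_, τE] (fun z => e (inclMap hsubCh z)) :=
      he.comp (inclMap_continuous hacCh hsubCh)
    have hcW : c p₀ ∈ {φ | ∀ z, app φ (e (inclMap hsubCh z)) ∈ U} := by
      intro z
      induction z using WithTop.recTopCoe with
      | top =>
        rw [inclMap_top, hνCh]
        exact hpU
      | coe l =>
        rw [inclMap_coe]
        exact hsub₀ ⟨(hbounds l.1 l.2).1, le_of_lt (hbounds l.1 l.2).2⟩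
    have hWopen := hW Lch hacCh (fun z => e (inclMap hsubCh z)) htcont U hU
    have hpre : c ⁻¹' {φ | ∀ z, app φ (e (inclMap hsubCh z)) ∈ U} ∈ 𝓝 p₀ :=
      (hc.continuousAt).preimage_mem_nhds (hWopen.mem_nhds hcW)
    obtain ⟨x₁, hx₁, hsub₁⟩ := exists_Ioc_subset_of_mem_nhds hpre hne
    refine Filter.mem_of_superset ((isOpen_Ioc' (max x₀ x₁) p₀).mem_nhds
      ⟨max_lt hx₀ hx₁, le_rfl⟩) ?_
    intro z hz
    have hzW : ∀ zz, app (c z) (e (inclMap hsubCh zz)) ∈ U :=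
      hsub₁ ⟨lt_of_le_of_lt (le_max_right _ _) hz.1, hz.2⟩
    rcases eq_or_lt_of_le hz.2 with rfl | hzlt
    · have h := hzW ⊤
      rw [inclMap_top, hνCh] at h
      exact hUs h
    · obtain ⟨j, hj, hje⟩ := hcov z (lt_of_le_of_lt (le_max_left _ _) hz.1) hzlt
      have h := hzW (WithTop.some ⟨j, hj⟩)
      rw [inclMap_coe] at h
      have hje' : WithTop.some (⟨j, hsubCh j hj⟩ : ↥P) = z := hje
      rw [hje'] at h
      exact hUs h

end SecF

end Stmt8

namespace Stmt8

section SecG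

set_option linter.unusedSectionVars false
set_option maxHeartbeats 2000000

variable {J : Type v} [LinearOrder J] [WellFoundedLT J]

lemma mjTop_def {E : Type*} {Z' : Type*} (τE : TopologicalSpace E) (τZ' : TopologicalSpace Z') :
    mjTop J τE τZ' = generateFrom {W : Set (Cts E Z' τE τZ') |
      ∃ I : Set J, AlmostClosed I ∧ ∃ t : WithTop ↥I → E, Continuous[_, τE] t ∧
        ∃ U : Set Z', IsOpen[τZ'] U ∧ W = {f | ∀ z : WithTop ↥I, f.1 (t z) ∈ U}} := rfl

lemma hW_gen {E : Type*} {Z' : Type*} (τE : TopologicalSpace E) (τZ' : TopologicalSpace Z') :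
    ∀ Kt : Set J, AlmostClosed Kt → ∀ t : WithTop ↥Kt → E, Continuous[_, τE] t →
    ∀ U : Set Z', IsOpen[τZ'] U →
    IsOpen[@jTop J _ _ (mjTop J τE τZ')] {g : Cts E Z' τE τZ' | ∀ z, g.1 (t z) ∈ U} := by
  intro Kt hKt t ht U hU
  have h1 : IsOpen[mjTop J τE τZ'] {g : Cts E Z' τE τZ' | ∀ z, g.1 (t z) ∈ U} :=
    @isOpen_generateFrom_of_mem _ _ {g : Cts E Z' τE τZ' | ∀ z, g.1 (t z) ∈ U}
      ⟨Kt, hKt, t, ht, U, hU, rfl⟩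
  exact h1.mono (jTop_le _)

variable {X : Type u} {Y : Type w} {Z : Type w}
variable [tX : TopologicalSpace X] [tY : TopologicalSpace Y] [tZ : TopologicalSpace Z]

lemma slice_cont (hY : IsJConvergence J Y)
    {f : X × Y → Z} (hf : Continuous[@jTop J _ (X × Y) _, tZ] f) (x : X) :
    Continuous[tY, tZ] (fun y => f (x, y)) := by
  have h1 : Continuous[tY, instTopologicalSpaceProd] (fun y : Y => ((x, y) : X × Y)) :=
    Continuous.prodMk continuous_const continuous_id
  have h2 := continuous_jTop_of_continuous (J := J) h1
  rw [jTop_eq hY] at h2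
  exact comp' hf h2

noncomputable def curryFun (hY : IsJConvergence J Y)
    (f : Cts (X × Y) Z (@jTop J _ (X × Y) _) tZ) (x : X) : Cts Y Z tY tZ :=
  ⟨fun y => f.1 (x, y), slice_cont hY f.2 x⟩

lemma curry_cont_raw (hX : IsJConvergence J X) (hY : IsJConvergence J Y)
    (f : Cts (X × Y) Z (@jTop J _ (X × Y) _) tZ) :
    Continuous[tX, mjTop J tY tZ] (curryFun hY f) := by
  rw [mjTop_def, continuous_generateFrom_iff]
  rintro W ⟨Kt, hKt, t, ht, U, hU, rfl⟩
  have hQ : (curryFun hY f ⁻¹' {g : Cts Y Z tY tZ | ∀ z, g.1 (t z) ∈ U}) =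
      {x : X | ∀ z, f.1 (x, t z) ∈ U} := rfl
  rw [hQ]
  have hcl : JClosedSet J X {x : X | ∀ z, f.1 (x, t z) ∈ U}ᶜ := by
    intro P hP p hp hv
    simp only [mem_compl_iff, mem_setOf_eq] at hv ⊢
    intro htop
    push_neg at hv
    set S := {q : WithTop ↥P × WithTop ↥Kt | f.1 (p q.1, t q.2) ∈ Uᶜ} with hS
    have hPC : PairClosed P Kt S := by
      intro N hN a b ha hb hvals
      have hmap : Continuous[_, tZ] (fun n => f.1 (p (a n), t (b n))) := by
        have h1 : Continuous[_, instTopologicalSpaceProd]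
            (fun n : WithTop ↥N => ((p (a n), t (b n)) : X × Y)) :=
          Continuous.prodMk (hp.comp ha) (ht.comp hb)
        exact comp' f.2 (continuous_into_jTop hN h1)
      exact path_limit_mem hN hmap hU.isClosed_compl hvals
    have hrows : ∀ i : ↥P, ∃ z, (WithTop.some i, z) ∈ S := fun i => hv i
    obtain ⟨z, hz⟩ := twoD hP hKt hPC hrows
    exact hz (htop z)
  have hcls := closed_of_jclosed hX hcl
  have h2 := hcls.isOpen_compl
  rwa [compl_compl] at h2

lemma curry_cont (hX : IsJConvergence J X) (hY : IsJConvergence J Y)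
    (f : Cts (X × Y) Z (@jTop J _ (X × Y) _) tZ) :
    Continuous[tX, @jTop J _ _ (mjTop J tY tZ)] (curryFun hY f) := by
  have h := continuous_jTop_of_continuous (J := J) (curry_cont_raw hX hY f)
  rwa [jTop_eq hX] at h

lemma uncurry_cont (g : Cts X (Cts Y Z tY tZ) tX (@jTop J _ _ (mjTop J tY tZ))) :
    Continuous[@jTop J _ (X × Y) _, tZ] (fun q : X × Y => (g.1 q.1).1 q.2) := by
  rw [continuous_def]
  intro U hU
  have hcl : JClosedSet J (X × Y) ((fun q : X × Y => (g.1 q.1).1 q.2) ⁻¹' U)ᶜ := by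
    intro P hP p hp hv
    have hmap : Continuous[_, tZ] (fun l => (g.1 ((p l).1)).1 ((p l).2)) := by
      refine ev_lemma tY tZ (@jTop J _ _ (mjTop J tY tZ)) (fun gg y => gg.1 y)
        (fun gg => gg.2) (hW_gen tY tZ) hP ?_ ?_
      · exact comp' g.2 (continuous_fst.comp hp)
      · exact continuous_snd.comp hp
    exact path_limit_mem hP hmap hU.isClosed_compl (fun i => hv i)
  have h1 := isClosed_jTop_of_jclosed hcl
  have h2 := h1.isOpen_compl
  rwa [compl_compl] at h2

lemma curry_functorial (hX : IsJConvergence J X) (hY : IsJConvergence J Y) :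
    Continuous[@jTop J _ _ (mjTop J (@jTop J _ (X × Y) _) tZ),
        mjTop J tX (@jTop J _ _ (mjTop J tY tZ))]
      (fun f : Cts (X × Y) Z (@jTop J _ (X × Y) _) tZ =>
        (⟨curryFun hY f, curry_cont hX hY f⟩ :
          Cts X (Cts Y Z tY tZ) tX (@jTop J _ _ (mjTop J tY tZ)))) := by
  refine continuous_generateFrom_iff.mpr ?_
  rintro W ⟨Nt, hNt, sX, hsX, 𝒰, h𝒰, rfl⟩
  have hcl : @JClosedSet J _ _ (mjTop J (@jTop J _ (X × Y) _) tZ)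
      {f : Cts (X × Y) Z (@jTop J _ (X × Y) _) tZ | ∀ z, curryFun hY f (sX z) ∈ 𝒰}ᶜ := by
    intro P hP h hh hv
    simp only [mem_compl_iff, mem_setOf_eq] at hv ⊢
    intro htop
    push_neg at hv
    set S := {q : WithTop ↥P × WithTop ↥Nt | curryFun hY (h q.1) (sX q.2) ∈ 𝒰ᶜ} with hS
    have hPC : PairClosed P Nt S := by
      intro N hN a b ha hb hvals
      have hψ : Continuous[_, mjTop J tY tZ]
          (fun n => curryFun hY (h (a n)) (sX (b n))) := by
        rw [mjTop_def, continuous_generateFrom_iff]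
        rintro W' ⟨Kt, hKt, t, ht, U, hU, rfl⟩
        have hclN : JClosedSet J (WithTop ↥N)
            ((fun n => curryFun hY (h (a n)) (sX (b n))) ⁻¹'
              {g : Cts Y Z tY tZ | ∀ z, g.1 (t z) ∈ U})ᶜ := by
          intro Q hQ e he hv'
          simp only [mem_compl_iff, mem_preimage, mem_setOf_eq] at hv' ⊢
          intro htop2
          push_neg at hv'
          set S' := {r : WithTop ↥Q × WithTop ↥Kt |
            (h (a (e r.1))).1 (sX (b (e r.1)), t r.2) ∈ Uᶜ} with hS'
          have hPC' : PairClosed Q Kt S' := by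
            intro R hR a' b' ha' hb' hvals'
            have hmap : Continuous[_, tZ]
                (fun r => (h (a (e (a' r)))).1 (sX (b (e (a' r))), t (b' r))) := by
              refine ev_lemma (@jTop J _ (X × Y) _) tZ
                (@jTop J _ _ (mjTop J (@jTop J _ (X × Y) _) tZ))
                (fun ff q => ff.1 q) (fun ff => ff.2)
                (hW_gen (@jTop J _ (X × Y) _) tZ) hR ?_ ?_
              · exact continuous_into_jTop hR (comp' hh (ha.comp (he.comp ha')))
              · refine continuous_into_jTop hR ?_
                exact Continuous.prodMk (hsX.comp (hb.comp (he.comp ha'))) (ht.comp hb')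
            exact path_limit_mem hR hmap hU.isClosed_compl hvals'
          have hrows' : ∀ q : ↥Q, ∃ κ, (WithTop.some q, κ) ∈ S' := fun q => hv' q
          obtain ⟨κ, hκ⟩ := twoD hQ hKt hPC' hrows'
          exact hκ (htop2 κ)
        have h1 := closed_of_jclosed (jconv_TT hN) hclN
        have h2 := h1.isOpen_compl
        rwa [compl_compl] at h2
      have hψ' := continuous_into_jTop hN hψ
      letI : TopologicalSpace (Cts Y Z tY tZ) := @jTop J _ _ (mjTop J tY tZ)
      exact path_limit_mem hN hψ' h𝒰.isClosed_compl hvals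
    have hrows : ∀ i : ↥P, ∃ ζ, (WithTop.some i, ζ) ∈ S := fun i => hv i
    obtain ⟨ζ, hζ⟩ := twoD hP hNt hPC hrows
    exact hζ (htop ζ)
  have h1 := isClosed_jTop_of_jclosed hcl
  have h2 := h1.isOpen_compl
  rw [compl_compl] at h2
  exact h2

lemma uncurry_functorial :
    Continuous[@jTop J _ _ (mjTop J tX (@jTop J _ _ (mjTop J tY tZ))),
        mjTop J (@jTop J _ (X × Y) _) tZ]
      (fun g : Cts X (Cts Y Z tY tZ) tX (@jTop J _ _ (mjTop J tY tZ)) =>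
        (⟨fun q : X × Y => (g.1 q.1).1 q.2, uncurry_cont g⟩ :
          Cts (X × Y) Z (@jTop J _ (X × Y) _) tZ)) := by
  refine continuous_generateFrom_iff.mpr ?_
  rintro W ⟨Nt, hNt, r, hr, U, hU, rfl⟩
  have hcl : @JClosedSet J _ _ (mjTop J tX (@jTop J _ _ (mjTop J tY tZ)))
      {g : Cts X (Cts Y Z tY tZ) tX (@jTop J _ _ (mjTop J tY tZ)) |
        ∀ ν, (g.1 (r ν).1).1 (r ν).2 ∈ U}ᶜ := by
    intro P hP h hh hv
    simp only [mem_compl_iff, mem_setOf_eq] at hv ⊢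
    intro htop
    push_neg at hv
    set S := {q : WithTop ↥P × WithTop ↥Nt |
      ((h q.1).1 (r q.2).1).1 (r q.2).2 ∈ Uᶜ} with hS
    have hPC : PairClosed P Nt S := by
      intro N hN a b ha hb hvals
      have hχ : Continuous[_, @jTop J _ _ (mjTop J tY tZ)]
          (fun n => (h (a n)).1 ((r (b n)).1)) := by
        refine ev_lemma tX (@jTop J _ _ (mjTop J tY tZ))
          (@jTop J _ _ (mjTop J tX (@jTop J _ _ (mjTop J tY tZ))))
          (fun gg x => gg.1 x) (fun gg => gg.2)
          (hW_gen tX (@jTop J _ _ (mjTop J tY tZ))) hN ?_ ?_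
        · exact continuous_into_jTop hN (comp' hh ha)
        · exact continuous_fst.comp (cont_mono_rng (jTop_le _) (comp' hr hb))
      have hmap : Continuous[_, tZ]
          (fun n => ((h (a n)).1 ((r (b n)).1)).1 ((r (b n)).2)) := by
        refine ev_lemma tY tZ (@jTop J _ _ (mjTop J tY tZ))
          (fun gg y => gg.1 y) (fun gg => gg.2) (hW_gen tY tZ) hN hχ ?_
        exact continuous_snd.comp (cont_mono_rng (jTop_le _) (comp' hr hb))
      exact path_limit_mem hN hmap hU.isClosed_compl hvals
    have hrows : ∀ i : ↥P, ∃ ν, (WithTop.some i, ν) ∈ S := fun i => hv i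
    obtain ⟨ν, hν⟩ := twoD hP hNt hPC hrows
    exact hν (htop ν)
  have h1 := isClosed_jTop_of_jclosed hcl
  have h2 := h1.isOpen_compl
  rw [compl_compl] at h2
  exact h2

end SecG

end Stmt8

-- STATEMENT 8
theorem stmt8 {J : Type v} [LinearOrder J] [WellFoundedLT J] [TopologicalSpace J]
    [OrderTopology J] [NoncompactSpace J] {X : Type u} {Y : Type w} {Z : Type w}
    [tX : TopologicalSpace X] [tY : TopologicalSpace Y] [tZ : TopologicalSpace Z]
    (hX : IsJConvergence J X) (hY : IsJConvergence J Y) (hZ : IsJConvergence J Z) :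
    letI tA : TopologicalSpace (Cts (X × Y) Z (jTop J (X × Y)) tZ) :=
      @jTop J _ _ (mjTop J (jTop J (X × Y)) tZ)
    letI tB : TopologicalSpace
        (Cts X (Cts Y Z tY tZ) tX (@jTop J _ _ (mjTop J tY tZ))) :=
      @jTop J _ _ (mjTop J tX (@jTop J _ _ (mjTop J tY tZ)))
    ∃ H : Homeomorph (Cts (X × Y) Z (jTop J (X × Y)) tZ)
        (Cts X (Cts Y Z tY tZ) tX (@jTop J _ _ (mjTop J tY tZ))),
      ∀ (f : Cts (X × Y) Z (jTop J (X × Y)) tZ) (x : X) (y : Y),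
        ((H.toEquiv f).1 x).1 y = f.1 (x, y) := by
  letI tA : TopologicalSpace (Cts (X × Y) Z (jTop J (X × Y)) tZ) :=
    @jTop J _ _ (mjTop J (jTop J (X × Y)) tZ)
  letI tB : TopologicalSpace
      (Cts X (Cts Y Z tY tZ) tX (@jTop J _ _ (mjTop J tY tZ))) :=
    @jTop J _ _ (mjTop J tX (@jTop J _ _ (mjTop J tY tZ)))
  have hcur : Continuous[tA, tB]
      (fun f : Cts (X × Y) Z (@jTop J _ (X × Y) _) tZ =>
        (⟨Stmt8.curryFun hY f, Stmt8.curry_cont hX hY f⟩ :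
          Cts X (Cts Y Z tY tZ) tX (@jTop J _ _ (mjTop J tY tZ)))) := by
    have h := Stmt8.continuous_jTop_of_continuous (J := J)
      (Stmt8.curry_functorial (tZ := tZ) hX hY)
    rwa [Stmt8.jTop_idem (J := J) (mjTop J (@jTop J _ (X × Y) _) tZ)] at h
  have huncur : Continuous[tB, tA]
      (fun g : Cts X (Cts Y Z tY tZ) tX (@jTop J _ _ (mjTop J tY tZ)) =>
        (⟨fun q : X × Y => (g.1 q.1).1 q.2, Stmt8.uncurry_cont g⟩ :
          Cts (X × Y) Z (@jTop J _ (X × Y) _) tZ)) := by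
    have h := Stmt8.continuous_jTop_of_continuous (J := J)
      (Stmt8.uncurry_functorial (J := J) (tX := tX) (tY := tY) (tZ := tZ))
    rwa [Stmt8.jTop_idem (J := J) (mjTop J tX (@jTop J _ _ (mjTop J tY tZ)))] at h
  refine ⟨⟨⟨fun f => ⟨Stmt8.curryFun hY f, Stmt8.curry_cont hX hY f⟩,
      fun g => ⟨fun q : X × Y => (g.1 q.1).1 q.2, Stmt8.uncurry_cont g⟩, ?_, ?_⟩,
      hcur, huncur⟩, fun f x y => rfl⟩
  · intro f
    apply Subtype.ext
    funext q
    rfl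
  · intro g
    apply Subtype.ext
    funext x
    apply Subtype.ext
    funext y
    rfl
end

section
/- Fix a non-compact well-ordered space J. Let X be a J-convergence space and q : X → Y a quotient map. Then for any topological space Z, the map q × id : X ×_J Z → Y ×_J Z is a quotient map. -/
open Set Topology TopologicalSpace

universe u v w

set_option linter.unusedSectionVars false
set_option linter.unusedVariables false
set_option maxHeartbeats 1000000

instance withTopOrderTopology_orderTopology {α : Type*} [Preorder α] :
    OrderTopology (WithTop α) := ⟨rfl⟩

noncomputable def orderBotOfWF {α : Type*} [LinearOrder α] [WellFoundedLT α] [Nonempty α] :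
    OrderBot α where
  bot := (IsWellFounded.wf (r := ((· < ·) : α → α → Prop))).min Set.univ Set.univ_nonempty
  bot_le a := not_lt.1 ((IsWellFounded.wf).not_lt_min Set.univ (Set.mem_univ a))

lemma compactSpace_wf {α : Type*} [LinearOrder α] [WellFoundedLT α] [OrderTop α]
    [TopologicalSpace α] [OrderTopology α] : CompactSpace α := by
  letI : OrderBot α := orderBotOfWF
  letI := WellFoundedLT.conditionallyCompleteLinearOrderBot α
  constructor
  have h : IsCompact (Set.Icc (⊥ : α) ⊤) := isCompact_Icc
  simpa [Set.Icc_bot_top] using h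


variable {α : Type*}

/-- `x` is a limit from below. -/
def IsLL [Preorder α] (x : α) : Prop := IsLUB (Set.Iio x) x ∧ (Set.Iio x).Nonempty

lemma exists_isLUB_wf [LinearOrder α] [WellFoundedLT α] [OrderTop α] (S : Set α) :
    ∃ l, IsLUB S l := by
  have hne : (upperBounds S).Nonempty := ⟨⊤, fun y _ => le_top⟩
  refine ⟨(IsWellFounded.wf (r := ((· < ·) : α → α → Prop))).min _ hne, ?_, ?_⟩
  · exact (IsWellFounded.wf).min_mem _ hne
  · intro c hc
    exact not_lt.1 ((IsWellFounded.wf).not_lt_min _ hc)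

noncomputable def lubp [LinearOrder α] [WellFoundedLT α] [OrderTop α] (S : Set α) : α :=
  (exists_isLUB_wf S).choose

lemma lubp_spec [LinearOrder α] [WellFoundedLT α] [OrderTop α] (S : Set α) :
    IsLUB S (lubp S) := (exists_isLUB_wf S).choose_spec

lemma Iic_mem_nhds_wf [LinearOrder α] [WellFoundedLT α] [TopologicalSpace α] [OrderTopology α]
    (x : α) : Set.Iic x ∈ nhds x := by
  rcases Set.eq_empty_or_nonempty (Set.Ioi x) with h | h
  · have : Set.Iic x = Set.univ := by
      ext y; simp only [mem_Iic, mem_univ, iff_true]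
      by_contra hy
      exact (Set.eq_empty_iff_forall_notMem.1 h y) (not_le.1 hy)
    rw [this]; exact Filter.univ_mem
  · set m := (IsWellFounded.wf (r := ((· < ·) : α → α → Prop))).min _ h with hm
    have hxm : x < m := (IsWellFounded.wf).min_mem _ h
    have : Set.Iic x = Set.Iio m := by
      ext y
      constructor
      · intro hy; exact lt_of_le_of_lt hy hxm
      · intro hy
        by_contra hxy
        exact (IsWellFounded.wf).not_lt_min _ (not_le.1 hxy) hy
    rw [this]; exact (isOpen_Iio).mem_nhds hxm

lemma Ioc_mem_nhds_wf [LinearOrder α] [WellFoundedLT α] [TopologicalSpace α] [OrderTopology α]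
    {a x : α} (h : a < x) : Set.Ioc a x ∈ nhds x := by
  rw [show Set.Ioc a x = Set.Ioi a ∩ Set.Iic x from rfl]
  exact Filter.inter_mem ((isOpen_Ioi).mem_nhds h) (Iic_mem_nhds_wf x)

lemma continuous_of_monotone_lub [LinearOrder α] [WellFoundedLT α] [TopologicalSpace α]
    [OrderTopology α] {β : Type*} [LinearOrder β] [TopologicalSpace β] [OrderTopology β]
    {f : α → β} (hmono : Monotone f) (hlub : ∀ x, IsLL x → IsLUB (f '' Set.Iio x) (f x)) :
    Continuous f := by
  rw [continuous_iff_continuousAt]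
  intro x
  rw [ContinuousAt, tendsto_order]
  constructor
  · intro b hb
    by_cases hLL : IsLL x
    · obtain ⟨y, hy, hby⟩ : ∃ y ∈ Set.Iio x, b < f y := by
        by_contra hcon
        push_neg at hcon
        have : f x ≤ b := (hlub x hLL).2 (by rintro _ ⟨y, hy, rfl⟩; exact hcon y hy)
        exact absurd this (not_le.2 hb)
      filter_upwards [(isOpen_Ioi).mem_nhds hy] with z hz
      exact lt_of_lt_of_le hby (hmono (le_of_lt hz))
    · rcases Set.eq_empty_or_nonempty (Set.Iio x) with hemp | hne
      · filter_upwards with z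
        have : x ≤ z := not_lt.1 (fun h => (Set.eq_empty_iff_forall_notMem.1 hemp z) h)
        exact lt_of_lt_of_le hb (hmono this)
      · have hnl : ¬ IsLUB (Set.Iio x) x := fun h => hLL ⟨h, hne⟩
        obtain ⟨c, hc_ub, hc⟩ : ∃ c, c ∈ upperBounds (Set.Iio x) ∧ c < x := by
          have h2 : ¬ (∀ c ∈ upperBounds (Set.Iio x), x ≤ c) :=
            fun h => hnl ⟨fun y hy => le_of_lt hy, h⟩
          push_neg at h2
          obtain ⟨c, hc1, hc2⟩ := h2
          exact ⟨c, hc1, hc2⟩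
        filter_upwards [(isOpen_Ioi).mem_nhds hc] with z hz
        have hxz : x ≤ z := not_lt.1 fun h => absurd (hc_ub h) (not_le.2 hz)
        exact lt_of_lt_of_le hb (hmono hxz)
  · intro b hb
    filter_upwards [Iic_mem_nhds_wf x] with z hz
    exact lt_of_le_of_lt (hmono hz) hb



section AC

variable {J : Type*} [LinearOrder J] [WellFoundedLT J]

lemma AlmostClosed.nonempty {I : Set J} (h : AlmostClosed I) : I.Nonempty := by
  obtain ⟨ℓ, hdiff, -⟩ := h
  rcases Set.eq_empty_or_nonempty I with hemp | hne
  · rw [hemp] at hdiff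
    simp only [Set.image_empty, closure_empty, Set.empty_diff] at hdiff
    exact absurd hdiff.symm (Set.singleton_ne_empty ℓ)
  · exact hne

lemma AlmostClosed.strict_ub {I : Set J} (h : AlmostClosed I) :
    ∃ ℓ : WithTop J, (ℓ ∈ closure ((fun j : J => (j : WithTop J)) '' I) ∧
      ℓ ∉ (fun j : J => (j : WithTop J)) '' I) ∧
      IsLeast {s : WithTop J | ∀ i ∈ (fun j : J => (j : WithTop J)) '' I, i < s} ℓ := by
  obtain ⟨ℓ, hdiff, hleast⟩ := h
  have : ℓ ∈ closure _ \ _ := hdiff ▸ Set.mem_singleton ℓ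
  exact ⟨ℓ, ⟨this.1, this.2⟩, hleast⟩

lemma AlmostClosed.noMax {I : Set J} (h : AlmostClosed I) {i : J} (hi : i ∈ I) :
    ∃ i' ∈ I, i < i' := by
  obtain ⟨ℓ, ⟨hcl, hnot⟩, hleast⟩ := h.strict_ub
  have hlt : ((i : WithTop J)) < ℓ := hleast.1 _ ⟨i, hi, rfl⟩
  have := mem_closure_iff.1 hcl (Set.Ioi (i : WithTop J)) isOpen_Ioi hlt
  obtain ⟨x, hx1, j, hj, rfl⟩ := this
  exact ⟨j, hj, WithTop.coe_lt_coe.1 hx1⟩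

lemma AlmostClosed.exists_coe_gt {I : Set J} (h : AlmostClosed I) {c : WithTop ↥I}
    (hc : c < ⊤) : ∃ i : ↥I, c < WithTop.some i := by
  induction c using WithTop.recTopCoe with
  | top => exact absurd hc (lt_irrefl ⊤)
  | coe k =>
    obtain ⟨i', hi', hk⟩ := h.noMax k.2
    exact ⟨⟨i', hi'⟩, WithTop.coe_lt_coe.2 hk⟩

lemma AlmostClosed.top_isLL {I : Set J} (h : AlmostClosed I) :
    IsLL (⊤ : WithTop ↥I) := by
  obtain ⟨i₀, hi₀⟩ := h.nonempty
  constructor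
  · constructor
    · intro y hy; exact le_of_lt hy
    · intro c hc
      by_contra hcon
      obtain ⟨i, hi⟩ := h.exists_coe_gt (not_le.1 hcon)
      exact absurd (hc (WithTop.coe_lt_top i)) (not_le.2 hi)
  · exact ⟨WithTop.some ⟨i₀, hi₀⟩, WithTop.coe_lt_top _⟩

lemma AlmostClosed.exists_coe_mem_nhds {I : Set J} (h : AlmostClosed I)
    {N : Set (WithTop ↥I)} (hN : N ∈ nhds (⊤ : WithTop ↥I)) : ∃ i : ↥I, WithTop.some i ∈ N := by
  obtain ⟨i₀, hi₀⟩ := h.nonempty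
  obtain ⟨l, hl, hsub⟩ := exists_Ioc_subset_of_mem_nhds hN
    ⟨WithTop.some ⟨i₀, hi₀⟩, WithTop.coe_lt_top _⟩
  obtain ⟨i, hi⟩ := h.exists_coe_gt hl
  exact ⟨i, hsub ⟨hi, le_top⟩⟩

/-- the sub-index set below an internal point -/
def subIndex (K : Set J) (w : WithTop ↥K) : Set J :=
  {j | ∃ h : j ∈ K, (WithTop.some ⟨j, h⟩ : WithTop ↥K) < w}

noncomputable def subEmb (K : Set J) (w : WithTop ↥K) :
    WithTop ↥(subIndex K w) → WithTop ↥K :=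
  fun z => WithTop.recTopCoe w (fun i => WithTop.some (⟨i.1, i.2.choose⟩ : ↥K)) z

@[simp] lemma subEmb_top (K : Set J) (w : WithTop ↥K) : subEmb K w ⊤ = w := rfl

lemma subEmb_coe (K : Set J) (w : WithTop ↥K) (i : ↥(subIndex K w)) :
    subEmb K w (WithTop.some i) = WithTop.some (⟨i.1, i.2.choose⟩ : ↥K) := rfl

lemma subEmb_coe_lt (K : Set J) (w : WithTop ↥K) (i : ↥(subIndex K w)) :
    subEmb K w (WithTop.some i) < w := i.2.choose_spec

lemma subEmb_le (K : Set J) (w : WithTop ↥K) (z : WithTop ↥(subIndex K w)) :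
    subEmb K w z ≤ w := by
  induction z using WithTop.recTopCoe with
  | top => exact le_rfl
  | coe i => exact le_of_lt (subEmb_coe_lt K w i)

lemma subEmb_strictMono (K : Set J) (w : WithTop ↥K) : StrictMono (subEmb K w) := by
  intro a b hab
  induction a using WithTop.recTopCoe with
  | top => exact absurd hab (not_top_lt)
  | coe i =>
    induction b using WithTop.recTopCoe with
    | top => exact subEmb_coe_lt K w i
    | coe i' =>
      have : i < i' := WithTop.coe_lt_coe.1 hab
      exact WithTop.coe_lt_coe.2 (by exact this)

lemma subEmb_image_Iio (K : Set J) (w : WithTop ↥K) (z : WithTop ↥(subIndex K w)) :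
    subEmb K w '' Set.Iio z = Set.Iio (subEmb K w z) := by
  apply subset_antisymm
  · rintro _ ⟨y, hy, rfl⟩
    exact subEmb_strictMono K w hy
  · intro y hy
    rw [Set.mem_Iio] at hy
    induction y using WithTop.recTopCoe with
    | top => exact absurd hy (not_top_lt)
    | coe k =>
      have hkw : (WithTop.some k : WithTop ↥K) < w := by
        induction z using WithTop.recTopCoe with
        | top => exact hy
        | coe i => exact lt_trans hy (subEmb_coe_lt K w i)
      have hk' : k.1 ∈ subIndex K w := ⟨k.2, hkw⟩
      have hval : subEmb K w (WithTop.some (⟨k.1, hk'⟩ : ↥(subIndex K w))) = WithTop.some k := by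
        rw [subEmb_coe]
      refine ⟨WithTop.some (⟨k.1, hk'⟩ : ↥(subIndex K w)), ?_, hval⟩
      exact Set.mem_Iio.2 ((subEmb_strictMono K w).lt_iff_lt.1 (by rw [hval]; exact hy))

lemma subEmb_isLUB (K : Set J) (w : WithTop ↥K) {z : WithTop ↥(subIndex K w)}
    (hz : IsLL z) : IsLUB (subEmb K w '' Set.Iio z) (subEmb K w z) := by
  rw [subEmb_image_Iio]
  constructor
  · intro y hy; exact le_of_lt hy
  · intro c hc
    by_contra hcon
    have hclt : c < subEmb K w z := not_le.1 hcon
    have : c ∈ subEmb K w '' Set.Iio z := by rw [subEmb_image_Iio]; exact Set.mem_Iio.2 hclt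
    obtain ⟨zc, hzc_lt, rfl⟩ := this
    rw [Set.mem_Iio] at hzc_lt
    obtain ⟨y, hy, hzy⟩ : ∃ y ∈ Set.Iio z, ¬ y ≤ zc := by
      by_contra hcon2
      push_neg at hcon2
      have : z ≤ zc := hz.1.2 (fun y hy => hcon2 y hy)
      exact absurd this (not_le.2 hzc_lt)
    have h1 : subEmb K w y ∈ Set.Iio (subEmb K w zc) →
        subEmb K w y ≤ subEmb K w zc := fun h => le_of_lt (Set.mem_Iio.1 h)
    have h2 : subEmb K w y ≤ subEmb K w zc :=
      hc (Set.mem_Iio.2 (subEmb_strictMono K w (Set.mem_Iio.1 hy)))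
    exact absurd h2 (not_le.2 (subEmb_strictMono K w (not_le.1 hzy)))

lemma subEmb_isLL (K : Set J) (w : WithTop ↥K) {z : WithTop ↥(subIndex K w)}
    (hz : IsLL z) : IsLL (subEmb K w z) := by
  constructor
  · have := subEmb_isLUB K w hz
    rwa [subEmb_image_Iio] at this
  · obtain ⟨y, hy⟩ := hz.2
    exact ⟨subEmb K w y, Set.mem_Iio.2 (subEmb_strictMono K w (Set.mem_Iio.1 hy))⟩

lemma subEmb_continuous (K : Set J) (w : WithTop ↥K) : Continuous (subEmb K w) :=
  continuous_of_monotone_lub (subEmb_strictMono K w).monotone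
    (fun _ hz => subEmb_isLUB K w hz)

lemma subIndex_nonempty {K : Set J} {w : WithTop ↥K} (hw : IsLL w) :
    (subIndex K w).Nonempty := by
  obtain ⟨y, hy⟩ := hw.2
  rw [Set.mem_Iio] at hy
  induction y using WithTop.recTopCoe with
  | top => exact absurd hy (not_top_lt)
  | coe k => exact ⟨k.1, k.2, hy⟩

lemma subIndex_noMax {K : Set J} {w : WithTop ↥K} (hw : IsLL w) {j : J}
    (hj : j ∈ subIndex K w) : ∃ j' ∈ subIndex K w, j < j' := by
  obtain ⟨h, hlt⟩ := hj
  obtain ⟨y, hy, hgt⟩ : ∃ y ∈ Set.Iio w, ¬ y ≤ WithTop.some (⟨j, h⟩ : ↥K) := by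
    by_contra hcon
    push_neg at hcon
    have : w ≤ WithTop.some (⟨j, h⟩ : ↥K) := hw.1.2 (fun y hy => hcon y hy)
    exact absurd this (not_le.2 hlt)
  rw [Set.mem_Iio] at hy
  induction y using WithTop.recTopCoe with
  | top => exact absurd hy (not_top_lt)
  | coe k =>
    refine ⟨k.1, ⟨k.2, hy⟩, ?_⟩
    have : (⟨j, h⟩ : ↥K) < k := WithTop.coe_lt_coe.1 (not_le.1 hgt)
    exact this

end AC



section AC2

variable {J : Type*} [LinearOrder J] [WellFoundedLT J]

lemma almostClosed_subIndex {K : Set J} (hK : AlmostClosed K) {w : WithTop ↥K}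
    (hw : IsLL w) : AlmostClosed (subIndex K w) := by
  classical
  obtain ⟨ℓK, ⟨hKcl, hKnot⟩, hKleast⟩ := hK.strict_ub
  set cK : Set (WithTop J) := (fun j : J => (j : WithTop J)) '' K with hcK
  set cW : Set (WithTop J) := (fun j : J => (j : WithTop J)) '' (subIndex K w) with hcW
  have hsub : cW ⊆ cK := Set.image_mono (fun j hj => hj.1)
  set SU : Set (WithTop J) := {s : WithTop J | ∀ i ∈ cW, i < s} with hSU
  have hSU_ne : SU.Nonempty := by
    refine ⟨⊤, ?_⟩
    rintro _ ⟨j, hj, rfl⟩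
    exact WithTop.coe_lt_top j
  set ℓW : WithTop J := (IsWellFounded.wf (r := ((· < ·) : WithTop J → WithTop J → Prop))).min SU hSU_ne with hℓW
  have hℓW_mem : ℓW ∈ SU := (IsWellFounded.wf).min_mem SU hSU_ne
  have hℓW_least : ∀ b ∈ SU, ℓW ≤ b := fun b hb => not_lt.1 ((IsWellFounded.wf).not_lt_min SU hb)
  have hℓWK : ℓW ≤ ℓK := hℓW_least ℓK (fun i hi => hKleast.1 i (hsub hi))
  have hnotin : ℓW ∉ cW := fun h => absurd (hℓW_mem _ h) (lt_irrefl ℓW)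
  have hne : (subIndex K w).Nonempty := subIndex_nonempty hw
  refine ⟨ℓW, ?_, hℓW_mem, hℓW_least⟩
  apply subset_antisymm
  · rintro z ⟨hzcl, hznot⟩
    rcases lt_trichotomy z ℓW with hlt | heq | hgt
    · exfalso
      have hzK : z ∈ closure cK := closure_mono hsub hzcl
      have hzcases : z ∈ cK := by
        by_contra hzcK
        have : z ∈ closure cK \ cK := ⟨hzK, hzcK⟩
        have hz_eq : z = ℓK := by
          obtain ⟨ℓ', hdiff', -⟩ := hK
          rw [← hcK] at hdiff'
          have h1 : z ∈ ({ℓ'} : Set (WithTop J)) := hdiff' ▸ this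
          have h2 : ℓK ∈ ({ℓ'} : Set (WithTop J)) := hdiff' ▸ ⟨hKcl, hKnot⟩
          rw [Set.mem_singleton_iff] at h1 h2
          rw [h1, h2]
        exact absurd (hz_eq ▸ hlt) (not_lt.2 hℓWK)
      obtain ⟨j₀, hj₀K, rfl⟩ := hzcases
      have hj₀W : j₀ ∈ subIndex K w := by
        by_contra hcon
        have hz_ub : ((j₀ : J) : WithTop J) ∈ SU := by
          rintro _ ⟨j, hj, rfl⟩
          obtain ⟨hjK, hjlt⟩ := hj
          have hjj₀ : (⟨j, hjK⟩ : ↥K) < ⟨j₀, hj₀K⟩ := by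
            by_contra hle
            have : (WithTop.some (⟨j₀, hj₀K⟩ : ↥K)) ≤ WithTop.some (⟨j, hjK⟩ : ↥K) :=
              WithTop.coe_le_coe.2 (not_lt.1 hle)
            exact hcon ⟨hj₀K, lt_of_le_of_lt this hjlt⟩
          exact WithTop.coe_lt_coe.2 hjj₀
        exact absurd hlt (not_lt.2 (hℓW_least _ hz_ub))
      exact hznot ⟨j₀, hj₀W, rfl⟩
    · exact heq
    · exfalso
      obtain ⟨x, hx1, hx2⟩ := mem_closure_iff.1 hzcl (Set.Ioi ℓW) isOpen_Ioi hgt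
      exact absurd (hℓW_mem x hx2) (not_lt.2 (le_of_lt hx1))
  · rintro z hz
    rw [Set.mem_singleton_iff] at hz
    subst hz
    refine ⟨?_, hnotin⟩
    rw [mem_closure_iff]
    intro o ho hℓo
    have hex : ∃ l, l < ℓW := by
      obtain ⟨j, hj⟩ := hne
      exact ⟨(j : WithTop J), hℓW_mem _ ⟨j, hj, rfl⟩⟩
    obtain ⟨c, hc, hsubo⟩ := exists_Ioc_subset_of_mem_nhds (ho.mem_nhds hℓo) hex
    obtain ⟨x, hxW, hxgec⟩ : ∃ x ∈ cW, ¬ x < c := by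
      by_contra hcon
      push_neg at hcon
      exact absurd hc (not_lt.2 (hℓW_least c hcon))
    obtain ⟨j, hjW, rfl⟩ := hxW
    obtain ⟨j', hj'W, hjj'⟩ := subIndex_noMax hw hjW
    refine ⟨(j' : WithTop J), hsubo ⟨?_, ?_⟩, ⟨j', hj'W, rfl⟩⟩
    · exact lt_of_le_of_lt (not_lt.1 hxgec) (WithTop.coe_lt_coe.2 hjj')
    · exact le_of_lt (hℓW_mem _ ⟨j', hj'W, rfl⟩)

end AC2



section Core

variable {J : Type*} [LinearOrder J] [WellFoundedLT J] {I' I : Set J}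

open Classical in
/-- one step of the transfinite recursion -/
noncomputable def coreBody (A : Set (WithTop ↥I' × WithTop ↥I)) (u : WithTop ↥I')
    (v : WithTop ↥I) (a₁ : WithTop ↥I') (b₁ : WithTop ↥I) (x : WithTop ↥(subIndex I' u))
    (rec : ∀ y, y < x → WithTop ↥I' × WithTop ↥I) : WithTop ↥I' × WithTop ↥I :=
  if IsLL x then
    (lubp {p | ∃ y, ∃ h : y < x, p = (rec y h).1}, lubp {p | ∃ y, ∃ h : y < x, p = (rec y h).2})
  else if h : ∃ st, st ∈ A ∧
      max (max (lubp {p | ∃ y, ∃ h : y < x, p = (rec y h).1}) (subEmb I' u x)) a₁ < st.1 ∧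
      st.1 < u ∧ max (lubp {p | ∃ y, ∃ h : y < x, p = (rec y h).2}) b₁ < st.2 ∧ st.2 < v then
    h.choose
  else (u, v)

noncomputable def coreChi (A : Set (WithTop ↥I' × WithTop ↥I)) (u : WithTop ↥I')
    (v : WithTop ↥I) (a₁ : WithTop ↥I') (b₁ : WithTop ↥I) :
    WithTop ↥(subIndex I' u) → WithTop ↥I' × WithTop ↥I :=
  WellFounded.fix (IsWellFounded.wf (r := ((· < ·) : WithTop ↥(subIndex I' u) →
      WithTop ↥(subIndex I' u) → Prop))) (coreBody A u v a₁ b₁)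

lemma coreChi_eq (A : Set (WithTop ↥I' × WithTop ↥I)) (u : WithTop ↥I')
    (v : WithTop ↥I) (a₁ : WithTop ↥I') (b₁ : WithTop ↥I) (x : WithTop ↥(subIndex I' u)) :
    coreChi A u v a₁ b₁ x =
      coreBody A u v a₁ b₁ x (fun y _ => coreChi A u v a₁ b₁ y) :=
  WellFounded.fix_eq _ _ _

/-- the 2-D transfinite recursion witness -/
lemma core_witness (hI' : AlmostClosed I') (hI : AlmostClosed I)
    (A : Set (WithTop ↥I' × WithTop ↥I)) {u : WithTop ↥I'} {v : WithTop ↥I}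
    (hu : IsLL u) (hv : IsLL v) {a₁ : WithTop ↥I'} {b₁ : WithTop ↥I}
    (ha₁ : a₁ < u) (hb₁ : b₁ < v)
    (H1 : ∀ a, a₁ ≤ a → a < u → ∀ b, b₁ ≤ b → b < v →
      ∃ st : WithTop ↥I' × WithTop ↥I, st ∈ A ∧ a < st.1 ∧ st.1 < u ∧ b < st.2 ∧ st.2 < v)
    (H2 : ∀ t, b₁ < t → t ≤ v → (u, t) ∉ A)
    (H3 : ∀ s, a₁ < s → s ≤ u → (s, v) ∉ A) :
    ∃ (I'' : Set J) (_ : AlmostClosed I'')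
      (χ : WithTop ↥I'' → WithTop ↥I' × WithTop ↥I),
      Continuous χ ∧ (∀ i, χ (WithTop.some i) ∈ A) ∧ χ ⊤ ∉ A := by
  classical
  have hKac : AlmostClosed (subIndex I' u) := almostClosed_subIndex hI' hu
  set D := WithTop ↥(subIndex I' u) with hD
  set E : D → WithTop ↥I' := subEmb I' u with hE
  set χ := coreChi A u v a₁ b₁ with hχ
  set σ₁ : D → WithTop ↥I' := fun x => lubp {p | ∃ y, ∃ h : y < x, p = (χ y).1} with hσ₁def
  set σ₂ : D → WithTop ↥I := fun x => lubp {p | ∃ y, ∃ h : y < x, p = (χ y).2} with hσ₂def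
  have hσ₁ : ∀ x, IsLUB {p | ∃ y, ∃ h : y < x, p = (χ y).1} (σ₁ x) := fun x => lubp_spec _
  have hσ₂ : ∀ x, IsLUB {p | ∃ y, ∃ h : y < x, p = (χ y).2} (σ₂ x) := fun x => lubp_spec _
  have hstep : ∀ x : D, χ x = if IsLL x then (σ₁ x, σ₂ x)
      else if h : ∃ st, st ∈ A ∧ max (max (σ₁ x) (E x)) a₁ < st.1 ∧
        st.1 < u ∧ max (σ₂ x) b₁ < st.2 ∧ st.2 < v then h.choose else (u, v) := by
    intro x
    rw [hχ, coreChi_eq]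
    rfl
  -- Good points
  set Good : D → Prop := fun x => χ x ∈ A ∧ a₁ < (χ x).1 ∧ (χ x).1 < u ∧
    b₁ < (χ x).2 ∧ (χ x).2 < v ∧ E x ≤ (χ x).1 with hGooddef
  set Bad : Set D := {x | ¬ Good x} with hBaddef
  have hBadTop : (⊤ : D) ∈ Bad := by
    intro hG
    have h1 : E ⊤ ≤ (χ ⊤).1 := hG.2.2.2.2.2
    have h2 : (χ ⊤).1 < u := hG.2.2.1
    rw [hE, subEmb_top] at h1
    exact absurd (lt_of_le_of_lt h1 h2) (lt_irrefl u)
  have hBadne : Bad.Nonempty := ⟨⊤, hBadTop⟩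
  set x₀ : D := (IsWellFounded.wf (r := ((· < ·) : D → D → Prop))).min Bad hBadne with hx₀def
  have hx₀Bad : x₀ ∈ Bad := (IsWellFounded.wf).min_mem Bad hBadne
  have hGood : ∀ y, y < x₀ → Good y := by
    intro y hy
    by_contra h
    exact (IsWellFounded.wf).not_lt_min Bad h hy
  -- monotonicity up to x₀
  have hmono : ∀ y, y ≤ x₀ → ∀ z, z < y → (χ z).1 ≤ (χ y).1 ∧ (χ z).2 ≤ (χ y).2 := by
    intro y hy z hz
    have hz₁ : (χ z).1 ≤ σ₁ y := (hσ₁ y).1 ⟨z, hz, rfl⟩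
    have hz₂ : (χ z).2 ≤ σ₂ y := (hσ₂ y).1 ⟨z, hz, rfl⟩
    by_cases hLL : IsLL y
    · rw [hstep y, if_pos hLL]
      exact ⟨hz₁, hz₂⟩
    · rw [hstep y, if_neg hLL]
      by_cases hex : ∃ st, st ∈ A ∧ max (max (σ₁ y) (E y)) a₁ < st.1 ∧
          st.1 < u ∧ max (σ₂ y) b₁ < st.2 ∧ st.2 < v
      · rw [dif_pos hex]
        obtain ⟨-, h1, -, h2, -⟩ := hex.choose_spec
        constructor
        · exact le_of_lt (lt_of_le_of_lt (le_trans hz₁ (le_trans (le_max_left _ _) (le_max_left _ _))) h1)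
        · exact le_of_lt (lt_of_le_of_lt (le_trans hz₂ (le_max_left _ _)) h2)
      · rw [dif_neg hex]
        have hzx₀ : z < x₀ := lt_of_lt_of_le hz hy
        have hGz := hGood z hzx₀
        exact ⟨le_of_lt hGz.2.2.1, le_of_lt hGz.2.2.2.2.1⟩
  -- x₀ is a left limit
  have hTopLL : IsLL (⊤ : D) := hKac.top_isLL
  have hf4 : IsLL x₀ := by
    by_contra hLL
    have hx₀top : x₀ ≠ ⊤ := fun h => hLL (h ▸ hTopLL)
    have hEx₀ : E x₀ < u := by
      obtain ⟨i, hi⟩ := WithTop.ne_top_iff_exists.1 hx₀top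
      rw [← hi]
      exact subEmb_coe_lt I' u i
    have hσ₁u : σ₁ x₀ < u := by
      rcases Set.eq_empty_or_nonempty (Set.Iio x₀) with hemp | hne
      · have hsetemp : {p | ∃ y, ∃ h : y < x₀, p = (χ y).1} = ∅ := by
          ext p
          simp only [Set.mem_setOf_eq, Set.mem_empty_iff_false, iff_false, not_exists]
          intro y hy
          exact absurd (Set.mem_Iio.2 hy) (hemp ▸ Set.notMem_empty y)
        have : σ₁ x₀ ≤ a₁ := by
          rw [hσ₁def]
          simp only
          rw [hsetemp]
          exact (lubp_spec ∅).2 (by simp [upperBounds])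
        exact lt_of_le_of_lt this ha₁
      · -- Iio x₀ has a maximum
        obtain ⟨m, hm_lt, hm_max⟩ : ∃ m, m < x₀ ∧ ∀ z, z < x₀ → z ≤ m := by
          set c := lubp (Set.Iio x₀) with hc
          have hcspec : IsLUB (Set.Iio x₀) c := lubp_spec (Set.Iio x₀)
          have hcy : c ≤ x₀ := hcspec.2 (fun t ht => le_of_lt ht)
          rcases lt_or_eq_of_le hcy with hlt | heq
          · refine ⟨c, hlt, fun z hz => hcspec.1 hz⟩
          · exact absurd ⟨heq ▸ hcspec, hne⟩ hLL
        have hGm := hGood m hm_lt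
        have : σ₁ x₀ = (χ m).1 := by
          have hgr : IsGreatest {p | ∃ y, ∃ h : y < x₀, p = (χ y).1} ((χ m).1) := by
            constructor
            · exact ⟨m, hm_lt, rfl⟩
            · rintro p ⟨y, hy, rfl⟩
              rcases eq_or_lt_of_le (hm_max y hy) with heq | hlt2
              · rw [heq]
              · exact (hmono m (le_of_lt hm_lt) y hlt2).1
          exact (hσ₁ x₀).unique hgr.isLUB
        rw [this]
        exact hGm.2.2.1
    have hσ₂v : σ₂ x₀ < v := by
      rcases Set.eq_empty_or_nonempty (Set.Iio x₀) with hemp | hne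
      · have hsetemp : {p | ∃ y, ∃ h : y < x₀, p = (χ y).2} = ∅ := by
          ext p
          simp only [Set.mem_setOf_eq, Set.mem_empty_iff_false, iff_false, not_exists]
          intro y hy
          exact absurd (Set.mem_Iio.2 hy) (hemp ▸ Set.notMem_empty y)
        have : σ₂ x₀ ≤ b₁ := by
          rw [hσ₂def]
          simp only
          rw [hsetemp]
          exact (lubp_spec ∅).2 (by simp [upperBounds])
        exact lt_of_le_of_lt this hb₁
      · obtain ⟨m, hm_lt, hm_max⟩ : ∃ m, m < x₀ ∧ ∀ z, z < x₀ → z ≤ m := by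
          set c := lubp (Set.Iio x₀) with hc
          have hcspec : IsLUB (Set.Iio x₀) c := lubp_spec (Set.Iio x₀)
          have hcy : c ≤ x₀ := hcspec.2 (fun t ht => le_of_lt ht)
          rcases lt_or_eq_of_le hcy with hlt | heq
          · refine ⟨c, hlt, fun z hz => hcspec.1 hz⟩
          · exact absurd ⟨heq ▸ hcspec, hne⟩ hLL
        have hGm := hGood m hm_lt
        have : σ₂ x₀ = (χ m).2 := by
          have hgr : IsGreatest {p | ∃ y, ∃ h : y < x₀, p = (χ y).2} ((χ m).2) := by
            constructor
            · exact ⟨m, hm_lt, rfl⟩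
            · rintro p ⟨y, hy, rfl⟩
              rcases eq_or_lt_of_le (hm_max y hy) with heq | hlt2
              · rw [heq]
              · exact (hmono m (le_of_lt hm_lt) y hlt2).2
          exact (hσ₂ x₀).unique hgr.isLUB
        rw [this]
        exact hGm.2.2.2.2.1
    -- the choice branch succeeds, so x₀ is Good; contradiction
    have hex : ∃ st, st ∈ A ∧ max (max (σ₁ x₀) (E x₀)) a₁ < st.1 ∧
        st.1 < u ∧ max (σ₂ x₀) b₁ < st.2 ∧ st.2 < v := by
      have hau : max (max (σ₁ x₀) (E x₀)) a₁ < u := max_lt (max_lt hσ₁u hEx₀) ha₁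
      have hbv : max (σ₂ x₀) b₁ < v := max_lt hσ₂v hb₁
      obtain ⟨st, h1, h2, h3, h4, h5⟩ := H1 _ (le_max_right _ _) hau _ (le_max_right _ _) hbv
      exact ⟨st, h1, h2, h3, h4, h5⟩
    apply hx₀Bad
    have hval : χ x₀ = hex.choose := by
      rw [hstep x₀, if_neg hLL, dif_pos hex]
    obtain ⟨hA, h2, h3, h4, h5⟩ := hex.choose_spec
    rw [hGooddef]
    simp only
    rw [hval]
    refine ⟨hA, ?_, h3, ?_, h5, ?_⟩
    · exact lt_of_le_of_lt (le_max_right _ _) h2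
    · exact lt_of_le_of_lt (le_max_right _ _) h4
    · exact le_of_lt (lt_of_le_of_lt (le_trans (le_max_right _ _) (le_max_left _ _)) h2)
  -- value at x₀
  have hvalx₀ : χ x₀ = (σ₁ x₀, σ₂ x₀) := by rw [hstep x₀, if_pos hf4]
  have hσ₁_le_u : σ₁ x₀ ≤ u := (hσ₁ x₀).2 (by
    rintro p ⟨y, hy, rfl⟩
    exact le_of_lt (hGood y hy).2.2.1)
  have hσ₂_le_v : σ₂ x₀ ≤ v := (hσ₂ x₀).2 (by
    rintro p ⟨y, hy, rfl⟩
    exact le_of_lt (hGood y hy).2.2.2.2.1)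
  have ha₁σ : a₁ < σ₁ x₀ := by
    obtain ⟨y₀, hy₀⟩ := hf4.2
    rw [Set.mem_Iio] at hy₀
    exact lt_of_lt_of_le (hGood y₀ hy₀).2.1 ((hσ₁ x₀).1 ⟨y₀, hy₀, rfl⟩)
  have hb₁σ : b₁ < σ₂ x₀ := by
    obtain ⟨y₀, hy₀⟩ := hf4.2
    rw [Set.mem_Iio] at hy₀
    exact lt_of_lt_of_le (hGood y₀ hy₀).2.2.2.1 ((hσ₂ x₀).1 ⟨y₀, hy₀, rfl⟩)
  have hEσ : E x₀ ≤ σ₁ x₀ := by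
    have hElub := subEmb_isLUB I' u hf4
    apply hElub.2
    rintro p ⟨y, hy, rfl⟩
    rw [Set.mem_Iio] at hy
    exact le_trans (hGood y hy).2.2.2.2.2 ((hσ₁ x₀).1 ⟨y, hy, rfl⟩)
  have hnotA : (σ₁ x₀, σ₂ x₀) ∉ A := by
    intro hmem
    have hσ₁u : σ₁ x₀ < u := by
      rcases lt_or_eq_of_le hσ₁_le_u with h | h
      · exact h
      · exact absurd (h ▸ hmem) (H2 _ hb₁σ hσ₂_le_v)
    have hσ₂v : σ₂ x₀ < v := by
      rcases lt_or_eq_of_le hσ₂_le_v with h | h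
      · exact h
      · exact absurd (h ▸ hmem) (H3 _ ha₁σ hσ₁_le_u)
    apply hx₀Bad
    rw [hGooddef]
    simp only
    rw [hvalx₀]
    exact ⟨hmem, ha₁σ, hσ₁u, hb₁σ, hσ₂v, hEσ⟩
  -- the witness
  refine ⟨subIndex (subIndex I' u) x₀, almostClosed_subIndex hKac hf4,
    fun z => χ (subEmb (subIndex I' u) x₀ z), ?_, ?_, ?_⟩
  · -- continuity
    set E₂ := subEmb (subIndex I' u) x₀ with hE₂
    have hE₂le : ∀ z, E₂ z ≤ x₀ := subEmb_le _ _
    have hWmono1 : Monotone (fun z => (χ (E₂ z)).1) := by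
      intro z z' hzz
      rcases eq_or_lt_of_le hzz with heq | hlt
      · rw [heq]
      · exact (hmono (E₂ z') (hE₂le z') (E₂ z) (subEmb_strictMono _ _ hlt)).1
    have hWmono2 : Monotone (fun z => (χ (E₂ z)).2) := by
      intro z z' hzz
      rcases eq_or_lt_of_le hzz with heq | hlt
      · rw [heq]
      · exact (hmono (E₂ z') (hE₂le z') (E₂ z) (subEmb_strictMono _ _ hlt)).2
    have himg : ∀ z : WithTop ↥(subIndex (subIndex I' u) x₀),
        {p | ∃ y, ∃ h : y < E₂ z, p = (χ y).1} = (fun z => (χ (E₂ z)).1) '' Set.Iio z ∧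
        {p | ∃ y, ∃ h : y < E₂ z, p = (χ y).2} = (fun z => (χ (E₂ z)).2) '' Set.Iio z := by
      intro z
      constructor
      · ext p
        constructor
        · rintro ⟨y, hy, rfl⟩
          have : y ∈ subEmb (subIndex I' u) x₀ '' Set.Iio z := by
            rw [subEmb_image_Iio]
            exact Set.mem_Iio.2 hy
          obtain ⟨z', hz', rfl⟩ := this
          exact ⟨z', hz', rfl⟩
        · rintro ⟨z', hz', rfl⟩
          exact ⟨E₂ z', subEmb_strictMono _ _ (Set.mem_Iio.1 hz'), rfl⟩
      · ext p
        constructor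
        · rintro ⟨y, hy, rfl⟩
          have : y ∈ subEmb (subIndex I' u) x₀ '' Set.Iio z := by
            rw [subEmb_image_Iio]
            exact Set.mem_Iio.2 hy
          obtain ⟨z', hz', rfl⟩ := this
          exact ⟨z', hz', rfl⟩
        · rintro ⟨z', hz', rfl⟩
          exact ⟨E₂ z', subEmb_strictMono _ _ (Set.mem_Iio.1 hz'), rfl⟩
    have hW1 : Continuous (fun z => (χ (E₂ z)).1) := by
      apply continuous_of_monotone_lub hWmono1
      intro z hz
      have hLLE : IsLL (E₂ z) := subEmb_isLL _ _ hz
      have : (χ (E₂ z)).1 = σ₁ (E₂ z) := by rw [hstep (E₂ z), if_pos hLLE]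
      rw [this, ← (himg z).1]
      exact hσ₁ (E₂ z)
    have hW2 : Continuous (fun z => (χ (E₂ z)).2) := by
      apply continuous_of_monotone_lub hWmono2
      intro z hz
      have hLLE : IsLL (E₂ z) := subEmb_isLL _ _ hz
      have : (χ (E₂ z)).2 = σ₂ (E₂ z) := by rw [hstep (E₂ z), if_pos hLLE]
      rw [this, ← (himg z).2]
      exact hσ₂ (E₂ z)
    exact hW1.prodMk hW2
  · -- values in A
    intro i
    have hlt : subEmb (subIndex I' u) x₀ (WithTop.some i) < x₀ := subEmb_coe_lt _ _ i
    exact (hGood _ hlt).1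
  · -- top value not in A
    show χ x₀ ∉ A
    rw [hvalx₀]
    exact hnotA

end Core



section Witnesses

variable {J : Type*} [LinearOrder J] [WellFoundedLT J]

lemma singleton_nhds_of_not_isLL {α : Type*} [LinearOrder α] [WellFoundedLT α]
    [TopologicalSpace α] [OrderTopology α] {u : α} (h : ¬ IsLL u) :
    ∃ N ∈ nhds u, N ⊆ {u} := by
  rcases Set.eq_empty_or_nonempty (Set.Iio u) with hemp | hne
  · refine ⟨Set.Iic u, Iic_mem_nhds_wf u, ?_⟩
    intro y hy
    rcases lt_or_eq_of_le (Set.mem_Iic.1 hy) with hlt | heq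
    · exact absurd (Set.mem_Iio.2 hlt) (hemp ▸ Set.notMem_empty y)
    · exact heq
  · have hnl : ¬ IsLUB (Set.Iio u) u := fun hl => h ⟨hl, hne⟩
    obtain ⟨c, hc_ub, hc⟩ : ∃ c, c ∈ upperBounds (Set.Iio u) ∧ c < u := by
      have h2 : ¬ (∀ c ∈ upperBounds (Set.Iio u), u ≤ c) :=
        fun hh => hnl ⟨fun y hy => le_of_lt hy, hh⟩
      push_neg at h2
      obtain ⟨c, hc1, hc2⟩ := h2
      exact ⟨c, hc1, hc2⟩
    refine ⟨Set.Ioc c u, Ioc_mem_nhds_wf hc, ?_⟩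
    rintro y ⟨hy1, hy2⟩
    rcases lt_or_eq_of_le hy2 with hlt | heq
    · exact absurd hy1 (not_lt.2 (hc_ub hlt))
    · exact heq

lemma oneD_witness {I' : Set J} (hI' : AlmostClosed I') (B : Set (WithTop ↥I'))
    (hB : ¬ IsClosed B) :
    ∃ (I'' : Set J) (_ : AlmostClosed I'') (ψ : WithTop ↥I'' → WithTop ↥I'),
      Continuous ψ ∧ (∀ i, ψ (WithTop.some i) ∈ B) ∧ ψ ⊤ ∉ B := by
  obtain ⟨p, hpcl, hpB⟩ : ∃ p, p ∈ closure B ∧ p ∉ B := by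
    by_contra h
    push_neg at h
    exact hB (isClosed_of_closure_subset h)
  have hplb : (Set.Iio p).Nonempty := by
    by_contra h
    have h1 : Set.Iic p ∈ nhds p := Iic_mem_nhds_wf p
    obtain ⟨x, hx1, hx2⟩ := mem_closure_iff_nhds.1 hpcl _ h1
    rcases lt_or_eq_of_le (Set.mem_Iic.1 hx1) with hlt | heq
    · exact h ⟨x, Set.mem_Iio.2 hlt⟩
    · exact hpB (heq ▸ hx2)
  have hacc : ∀ c < p, ∃ x ∈ B, c < x ∧ x < p := by
    intro c hc
    obtain ⟨x, hx1, hx2⟩ := mem_closure_iff_nhds.1 hpcl _ (Ioc_mem_nhds_wf hc)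
    rcases lt_or_eq_of_le hx1.2 with hlt | heq
    · exact ⟨x, hx2, hx1.1, hlt⟩
    · exact absurd (heq ▸ hx2) hpB
  have hpLL : IsLL p := by
    constructor
    · constructor
      · exact fun y hy => le_of_lt hy
      · intro c hc
        by_contra hcon
        obtain ⟨x, -, hx2, hx3⟩ := hacc c (not_le.1 hcon)
        exact absurd (hc (Set.mem_Iio.2 hx3)) (not_le.2 hx2)
    · exact hplb
  obtain ⟨c₀, hc₀⟩ := hplb
  rw [Set.mem_Iio] at hc₀
  set A₂ : Set (WithTop ↥I' × WithTop ↥I') := {st | st.1 ∈ B ∧ st.2 ∈ B} with hA₂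
  obtain ⟨I'', hI'', χ, hχc, hχv, hχt⟩ := core_witness hI' hI' A₂ hpLL hpLL hc₀ hc₀
    (by
      intro a ha1 ha2 b hb1 hb2
      obtain ⟨x, hx, hx1, hx2⟩ := hacc a ha2
      obtain ⟨y, hy, hy1, hy2⟩ := hacc b hb2
      exact ⟨(x, y), ⟨hx, hy⟩, hx1, hx2, hy1, hy2⟩)
    (fun t _ _ h => hpB h.1)
    (fun s _ _ h => hpB h.2)
  by_cases h1 : (χ ⊤).1 ∈ B
  · refine ⟨I'', hI'', fun z => (χ z).2, continuous_snd.comp hχc, fun i => (hχv i).2, ?_⟩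
    intro h2
    exact hχt ⟨h1, h2⟩
  · exact ⟨I'', hI'', fun z => (χ z).1, continuous_fst.comp hχc, fun i => (hχv i).1, h1⟩

lemma prod_witness {I' I : Set J} (hI' : AlmostClosed I') (hI : AlmostClosed I)
    (A : Set (WithTop ↥I' × WithTop ↥I)) (hA : ¬ IsClosed A) :
    ∃ (I'' : Set J) (_ : AlmostClosed I'')
      (χ : WithTop ↥I'' → WithTop ↥I' × WithTop ↥I),
      Continuous χ ∧ (∀ i, χ (WithTop.some i) ∈ A) ∧ χ ⊤ ∉ A := by
  obtain ⟨uv, hcl, hnA⟩ : ∃ uv, uv ∈ closure A ∧ uv ∉ A := by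
    by_contra h
    push_neg at h
    exact hA (isClosed_of_closure_subset h)
  obtain ⟨u, v⟩ := uv
  by_cases hAu : IsClosed {t | (u, t) ∈ A}
  · by_cases hAv : IsClosed {s | (s, v) ∈ A}
    · -- main case
      have huLL : IsLL u := by
        by_contra h
        obtain ⟨N, hN, hNsub⟩ := singleton_nhds_of_not_isLL h
        have hvcl : v ∈ closure {t | (u, t) ∈ A} := by
          rw [mem_closure_iff_nhds]
          intro N' hN'
          obtain ⟨st, hst1, hst2⟩ := mem_closure_iff_nhds.1 hcl (N ×ˢ N')
            (prod_mem_nhds hN hN')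
          have : st.1 = u := hNsub hst1.1
          refine ⟨st.2, hst1.2, ?_⟩
          show (u, st.2) ∈ A
          rw [← this]
          exact hst2
        have : v ∈ {t | (u, t) ∈ A} := hAu.closure_subset hvcl
        exact hnA this
      have hvLL : IsLL v := by
        by_contra h
        obtain ⟨N, hN, hNsub⟩ := singleton_nhds_of_not_isLL h
        have hucl : u ∈ closure {s | (s, v) ∈ A} := by
          rw [mem_closure_iff_nhds]
          intro N' hN'
          obtain ⟨st, hst1, hst2⟩ := mem_closure_iff_nhds.1 hcl (N' ×ˢ N)
            (prod_mem_nhds hN' hN)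
          have : st.2 = v := hNsub hst1.2
          refine ⟨st.1, hst1.1, ?_⟩
          show (st.1, v) ∈ A
          rw [← this]
          exact hst2
        have : u ∈ {s | (s, v) ∈ A} := hAv.closure_subset hucl
        exact hnA this
      obtain ⟨a₁, ha₁, hsuba⟩ := exists_Ioc_subset_of_mem_nhds
        (hAv.isOpen_compl.mem_nhds (fun h => hnA h)) ⟨huLL.2.choose, Set.mem_Iio.1 huLL.2.choose_spec⟩
      obtain ⟨b₁, hb₁, hsubb⟩ := exists_Ioc_subset_of_mem_nhds
        (hAu.isOpen_compl.mem_nhds (fun h => hnA h)) ⟨hvLL.2.choose, Set.mem_Iio.1 hvLL.2.choose_spec⟩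
      have hH3 : ∀ s, a₁ < s → s ≤ u → (s, v) ∉ A := fun s h1 h2 h => (hsuba ⟨h1, h2⟩) h
      have hH2 : ∀ t, b₁ < t → t ≤ v → (u, t) ∉ A := fun t h1 h2 h => (hsubb ⟨h1, h2⟩) h
      have hH1 : ∀ a, a₁ ≤ a → a < u → ∀ b, b₁ ≤ b → b < v →
          ∃ st : WithTop ↥I' × WithTop ↥I, st ∈ A ∧ a < st.1 ∧ st.1 < u ∧ b < st.2 ∧ st.2 < v := by
        intro a ha1 hau b hb1 hbv
        obtain ⟨st, hst1, hst2⟩ := mem_closure_iff_nhds.1 hcl (Set.Ioc a u ×ˢ Set.Ioc b v)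
          (prod_mem_nhds (Ioc_mem_nhds_wf hau) (Ioc_mem_nhds_wf hbv))
        have hst1u : st.1 < u := by
          rcases lt_or_eq_of_le hst1.1.2 with hlt | heq
          · exact hlt
          · exfalso
            apply hH2 st.2 (lt_of_le_of_lt hb1 hst1.2.1) hst1.2.2
            have : ((u : WithTop ↥I'), st.2) = st := by
              rw [← heq]
            rw [this]
            exact hst2
        have hst2v : st.2 < v := by
          rcases lt_or_eq_of_le hst1.2.2 with hlt | heq
          · exact hlt
          · exfalso
            apply hH3 st.1 (lt_of_le_of_lt ha1 hst1.1.1) hst1.1.2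
            have : (st.1, (v : WithTop ↥I)) = st := by
              rw [← heq]
            rw [this]
            exact hst2
        exact ⟨st, hst2, hst1.1.1, hst1u, hst1.2.1, hst2v⟩
      exact core_witness hI' hI A huLL hvLL ha₁ hb₁ hH1 hH2 hH3
    · -- vertical slice not closed
      obtain ⟨I'', hI'', ψ, hc, hv', ht⟩ := oneD_witness hI' _ hAv
      refine ⟨I'', hI'', fun z => (ψ z, v), hc.prodMk continuous_const, fun i => hv' i, ht⟩
  · -- horizontal slice not closed
    obtain ⟨I'', hI'', ψ, hc, hv', ht⟩ := oneD_witness hI _ hAu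
    refine ⟨I'', hI'', fun z => (u, ψ z), continuous_const.prodMk hc, fun i => hv' i, ht⟩

end Witnesses



section Glue

variable {J : Type v} [LinearOrder J] [WellFoundedLT J]

lemma jclosed_preimage {X : Type u} {Y : Type u} [TopologicalSpace X] [TopologicalSpace Y]
    {f : X → Y} (hf : Continuous f) {C : Set Y} (hC : JClosedSet J Y C) :
    JClosedSet J X (f ⁻¹' C) :=
  fun I hI g hg hvals => hC I hI (f ∘ g) (hf.comp hg) hvals

lemma probe1_closed {I : Set J} (hI : AlmostClosed I) {T : Type u} [TopologicalSpace T]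
    {Θ : WithTop ↥I → T} (hΘ : Continuous Θ) {C : Set T} (hC : JClosedSet J T C) :
    IsClosed (Θ ⁻¹' C) := by
  by_contra h
  obtain ⟨I'', hI'', ψ, hc, hv, ht⟩ := oneD_witness hI _ h
  exact ht (hC I'' hI'' (Θ ∘ ψ) (hΘ.comp hc) hv)

lemma probe2_closed {I' I : Set J} (hI' : AlmostClosed I') (hI : AlmostClosed I)
    {T : Type u} [TopologicalSpace T] {Θ : WithTop ↥I' × WithTop ↥I → T} (hΘ : Continuous Θ)
    {C : Set T} (hC : JClosedSet J T C) : IsClosed (Θ ⁻¹' C) := by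
  by_contra h
  obtain ⟨I'', hI'', χ, hc, hv, ht⟩ := prod_witness hI' hI _ h
  exact ht (hC I'' hI'' (Θ ∘ χ) (hΘ.comp hc) hv)

lemma preimage_jTop_open {T : Type u} {Γ : Type v} [tT : TopologicalSpace T]
    [tΓ : TopologicalSpace Γ] {Θ : Γ → T}
    (hcl : ∀ C : Set T, JClosedSet J T C → IsClosed (Θ ⁻¹' C))
    {U : Set T} (hU : IsOpen[jTop J T] U) : IsOpen (Θ ⁻¹' U) := by
  have hU' : TopologicalSpace.GenerateOpen {U : Set T | JOpenSet J T U} U := hU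
  clear hU
  induction hU' with
  | basic V hV =>
    have h1 : IsClosed (Θ ⁻¹' Vᶜ) := hcl Vᶜ hV
    rw [Set.preimage_compl] at h1
    exact isClosed_compl_iff.1 h1
  | univ => exact isOpen_univ
  | inter s t _ _ ihs iht => rw [Set.preimage_inter]; exact ihs.inter iht
  | sUnion S _ ih => rw [Set.preimage_sUnion]; exact isOpen_biUnion ih

lemma jTop_continuous {S T : Type u} [tS : TopologicalSpace S] [tT : TopologicalSpace T]
    {g : S → T} (hg : Continuous g) : Continuous[jTop J S, jTop J T] g := by
  apply continuous_generateFrom_iff.2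
  intro V hV
  apply TopologicalSpace.GenerateOpen.basic
  show JClosedSet J S (g ⁻¹' V)ᶜ
  rw [← Set.preimage_compl]
  exact jclosed_preimage hg hV

end Glue

-- STATEMENT 9
theorem stmt9 {J : Type v} [LinearOrder J] [WellFoundedLT J] [TopologicalSpace J]
    [OrderTopology J] [NoncompactSpace J] {X Y Z : Type u}
    [TopologicalSpace X] [TopologicalSpace Y] [TopologicalSpace Z]
    (hX : IsJConvergence J X) (q : X → Y) (hq : IsQuotientMap q) :
    @IsQuotientMap (X × Z) (Y × Z) (jTop J (X × Z)) (jTop J (Y × Z)) (Prod.map q id) := by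
  classical
  refine (fun h => (@isQuotientMap_iff _ _ (jTop J (X × Z)) (jTop J (Y × Z)) _).2 ⟨(@isCoinducing_iff _ _ _ (jTop J (X × Z)) (jTop J (Y × Z))).2 fun W => (h.2 W).symm, h.1⟩) (?_ : Function.Surjective (Prod.map q id) ∧ ∀ W : Set (Y × Z), IsOpen[jTop J (Y × Z)] W ↔ IsOpen[jTop J (X × Z)] (Prod.map q id ⁻¹' W))
  constructor
  · exact hq.surjective.prodMap Function.surjective_id
  · intro W
    constructor
    · -- easy direction: continuity
      intro hW
      have hgc : Continuous (Prod.map q id : X × Z → Y × Z) :=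
        hq.continuous.prodMap continuous_id
      exact @Continuous.isOpen_preimage _ _ (jTop J (X × Z)) (jTop J (Y × Z)) _
        (jTop_continuous hgc) W hW
    · -- hard direction
      intro hpre
      apply TopologicalSpace.GenerateOpen.basic
      show JClosedSet J (Y × Z) Wᶜ
      intro I hI f hf hvals
      by_contra hWtop
      rw [Set.mem_compl_iff, not_not] at hWtop
      haveI hcs : CompactSpace (WithTop ↥I) := compactSpace_wf
      set V : Set (X × Z) := Prod.map q id ⁻¹' W with hVdef
      set k : WithTop ↥I → Z := fun p => (f p).2 with hkdef
      have hkc : Continuous k := continuous_snd.comp hf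
      have hhc : Continuous (fun p : WithTop ↥I => (f p).1) := continuous_fst.comp hf
      obtain ⟨x₀, hx₀⟩ := hq.surjective ((f ⊤).1)
      -- the probe θ : p ↦ (x₀, k p)
      have hθc : Continuous (fun p : WithTop ↥I => ((x₀ : X), k p)) :=
        continuous_const.prodMk hkc
      have hθV : IsOpen ((fun p : WithTop ↥I => ((x₀ : X), k p)) ⁻¹' V) :=
        preimage_jTop_open (fun C hC => probe1_closed hI hθc hC) hpre
      have hθtop : (⊤ : WithTop ↥I) ∈ (fun p : WithTop ↥I => ((x₀ : X), k p)) ⁻¹' V := by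
        show Prod.map q id (x₀, k ⊤) ∈ W
        show (q x₀, k ⊤) ∈ W
        rw [hx₀]
        exact hWtop
      obtain ⟨i₀, hi₀I⟩ := hI.nonempty
      obtain ⟨a₀, ha₀, hsuba₀⟩ := exists_Ioc_subset_of_mem_nhds (hθV.mem_nhds hθtop)
        ⟨WithTop.some ⟨i₀, hi₀I⟩, WithTop.coe_lt_top _⟩
      obtain ⟨i₁, hi₁⟩ := hI.exists_coe_gt ha₀
      set a₁ : WithTop ↥I := WithTop.some i₁ with ha₁def
      -- the tube set O
      set O : Set X := {x | ∀ p, a₁ ≤ p → (x, k p) ∈ V} with hOdef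
      have hOopen : IsOpen O := by
        by_contra hnot
        have hOc : ¬ IsClosed Oᶜ := fun h => hnot (isClosed_compl_iff.1 h)
        obtain ⟨I₂, hI₂, φ, hφ, hφvals, hφtop⟩ := hX Oᶜ hOc
        rw [Set.mem_compl_iff, not_not] at hφtop
        set ψ : WithTop ↥I₂ × WithTop ↥I → X × Z := fun pp => (φ pp.1, k pp.2) with hψdef
        have hψc : Continuous ψ := (hφ.comp continuous_fst).prodMk (hkc.comp continuous_snd)
        have hψV : IsOpen (ψ ⁻¹' V) :=
          preimage_jTop_open (fun C hC => probe2_closed hI₂ hI hψc hC) hpre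
        have hsub : ({(⊤ : WithTop ↥I₂)} : Set (WithTop ↥I₂)) ×ˢ Set.Ici a₁ ⊆ ψ ⁻¹' V := by
          rintro ⟨p2, p⟩ ⟨hp2, hp⟩
          have hp2' : p2 = ⊤ := hp2
          show (φ p2, k p) ∈ V
          rw [hp2']
          exact hφtop p (Set.mem_Ici.1 hp)
        obtain ⟨N, M, hNopen, hMopen, hNsub, hMsub, hNM⟩ :=
          generalized_tube_lemma isCompact_singleton (isClosed_Ici.isCompact) hψV hsub
        obtain ⟨i₂, hi₂⟩ := hI₂.exists_coe_mem_nhds (hNopen.mem_nhds (hNsub rfl))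
        apply hφvals i₂
        show φ (WithTop.some i₂) ∈ O
        intro p hp
        exact hNM (Set.mk_mem_prod hi₂ (hMsub hp))
      -- push down to Y
      have hqpre : q ⁻¹' {y | ∀ p, a₁ ≤ p → (y, k p) ∈ W} = O := rfl
      have hOtilde : IsOpen {y | ∀ p, a₁ ≤ p → (y, k p) ∈ W} :=
        hq.isOpen_preimage.1 (hqpre ▸ hOopen)
      have hftop : (f ⊤).1 ∈ {y | ∀ p, a₁ ≤ p → (y, k p) ∈ W} := by
        intro p hp
        have h1 : (x₀, k p) ∈ V := hsuba₀ ⟨lt_of_lt_of_le hi₁ hp, le_top⟩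
        have h2 : (q x₀, k p) ∈ W := h1
        rwa [hx₀] at h2
      have hpre2 : IsOpen ((fun p : WithTop ↥I => (f p).1) ⁻¹'
          {y | ∀ p, a₁ ≤ p → (y, k p) ∈ W}) := hOtilde.preimage hhc
      obtain ⟨b, hb, hsubb⟩ := exists_Ioc_subset_of_mem_nhds (hpre2.mem_nhds hftop)
        ⟨a₁, WithTop.coe_lt_top _⟩
      obtain ⟨i₃, hi₃⟩ := hI.exists_coe_gt (show max b a₁ < ⊤ from
        max_lt hb (WithTop.coe_lt_top _))
      have h1 : (f (WithTop.some i₃)).1 ∈ {y | ∀ p, a₁ ≤ p → (y, k p) ∈ W} :=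
        hsubb ⟨lt_of_le_of_lt (le_max_left b a₁) hi₃, le_top⟩
      have h2 : ((f (WithTop.some i₃)).1, k (WithTop.some i₃)) ∈ W :=
        h1 _ (le_of_lt (lt_of_le_of_lt (le_max_right b a₁) hi₃))
      exact (hvals i₃) h2
end

section
/- Fix a non-compact well-ordered space J. Every J-convergence space is a transfinite sequential space. -/
open Set Topology TopologicalSpace

universe u v w

lemma directed_le_order {J' : Type*} [Preorder J'] :
    directedTopology J' ≤ withTopOrderTopology := by
  show directedTopology J' ≤ Preorder.topology (WithTop J')
  letI := directedTopology J'
  rw [Preorder.topology]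
  apply le_generateFrom
  rintro s ⟨a, rfl | rfl⟩
  · cases a with
    | top =>
      have : {b : WithTop J' | ⊤ < b} = (∅ : Set (WithTop J')) := by
        ext x; simp [not_top_lt]
      rw [show Ioi (⊤ : WithTop J') = {b | ⊤ < b} from rfl, this]; exact isOpen_empty
    | coe j => exact isOpen_generateFrom_of_mem (Or.inr ⟨j, rfl⟩)
  · have : {b : WithTop J' | b < a} = ⋃ b ∈ {b : WithTop J' | b < a}, {b} := by
      ext x; simp
    rw [show Iio a = {b | b < a} from rfl, this]
    refine isOpen_biUnion fun b hb => ?_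
    lift b to J' using (hb.trans_le le_top).ne
    exact isOpen_generateFrom_of_mem (Or.inl ⟨b, rfl⟩)

-- STATEMENT 11
theorem stmt11 {J : Type v} [LinearOrder J] [WellFoundedLT J] [TopologicalSpace J]
    [OrderTopology J] [NoncompactSpace J] {X : Type u} [TopologicalSpace X]
    (hX : IsJConvergence J X) : TransfiniteSequential.{v} X := by
  intro A hA
  obtain ⟨I, hI, f, hf, hfA, hftop⟩ := hX A hA
  obtain ⟨ℓ, hcl, hleast⟩ := hI
  have hℓmem : ℓ ∈ closure ((fun j : J => (j : WithTop J)) '' I) := by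
    have : ℓ ∈ ({ℓ} : Set (WithTop J)) := rfl
    rw [← hcl] at this
    exact this.1
  have hne : Nonempty ↥I := by
    by_contra h
    rw [not_nonempty_iff] at h
    rw [Set.isEmpty_coe_sort.1 h] at hcl
    simp only [Set.image_empty, closure_empty, Set.empty_diff] at hcl
    exact (Set.singleton_ne_empty ℓ) hcl.symm
  have hnomax : NoMaxOrder ↥I := by
    constructor
    intro a
    by_contra h
    push_neg at h
    letI : OrderTopology (WithTop J) := ⟨rfl⟩
    have hsub : (fun j : J => (j : WithTop J)) '' I ⊆ Iic ((a : J) : WithTop J) := by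
      rintro _ ⟨b, hb, rfl⟩
      exact WithTop.coe_le_coe.2 (Subtype.coe_le_coe.2 (h ⟨b, hb⟩))
    have hℓle : ℓ ≤ ((a : J) : WithTop J) :=
      (isClosed_Iic.closure_subset_iff.2 hsub) hℓmem
    have hlt : ((a : J) : WithTop J) < ℓ :=
      hleast.1 _ ⟨(a : J), a.2, rfl⟩
    exact absurd (hlt.trans_le hℓle) (lt_irrefl _)
  exact ⟨↥I, inferInstance, inferInstance, hne, hnomax, f,
    continuous_le_dom directed_le_order hf, hfA, hftop⟩
end
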